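/- arXiv:2405.09677 — 6 statements merged into one kernel-verified Lean document; each statement's English description precedes it below -/
import Mathlib

section
/- Let u : ℝ^d → ℝ be Lipschitz with constant L. For δ > 0 define u_δ : ℝ^d → ℝ by u_δ = (average of u over δ(k+K)) on each set δ(k+K), k ∈ ℤ^d, and u_δ = u on ℝ^d \ δE. Set D₀ = inf{dist(K, k+K) : k ∈ ℤ^d, k ≠ 0}, which is strictly positive. Then there exists a constant C, depending only on d, the measure of Ω, L, the diameter of K and D₀, such that for all ε, δ > 0: F^φ_{δ,ε}(u_δ) ≤ C ∫_{{ξ ∈ ℝ^d : |ξ| ≥ D₀ δ/ε}} φ(ξ) |ξ|² dξ. -/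
open MeasureTheory Filter Metric Set Pointwise
open scoped Topology ENNReal NNReal

noncomputable section

/-- The lattice point of `ℤ^d` inside `ℝ^d`. -/
def lat (d : ℕ) (k : Fin d → ℤ) : EuclideanSpace ℝ (Fin d) := WithLp.toLp 2 (fun i => (k i : ℝ))

/-- The periodic set `E = ⋃_{k ∈ ℤ^d} (k + K)`. -/
def latSet (d : ℕ) (K : Set (EuclideanSpace ℝ (Fin d))) : Set (EuclideanSpace ℝ (Fin d)) :=
  ⋃ k : Fin d → ℤ, (lat d k +ᵥ K)

/-- `K` is compact, the closure of a bounded connected open set, with negligible boundary,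
whose integer translates are pairwise disjoint. -/
def IsAdmissibleK (d : ℕ) (K : Set (EuclideanSpace ℝ (Fin d))) : Prop :=
  (∃ U : Set (EuclideanSpace ℝ (Fin d)),
      IsOpen U ∧ IsConnected U ∧ Bornology.IsBounded U ∧ K = closure U) ∧
  MeasureTheory.volume (frontier K) = 0 ∧
  ∀ k : Fin d → ℤ, k ≠ 0 → Disjoint (lat d k +ᵥ K) K

/-- `φ` is a radial kernel with nonincreasing nonnegative profile `φ₀` and finite
second moment. -/
def IsKernel (d : ℕ) (φ : EuclideanSpace ℝ (Fin d) → ℝ) (φ₀ : ℝ → ℝ) : Prop :=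
  (∀ t, 0 ≤ φ₀ t) ∧ AntitoneOn φ₀ (Set.Ici 0) ∧ (∀ ξ, φ ξ = φ₀ ‖ξ‖) ∧
  MeasureTheory.Integrable (fun ξ : EuclideanSpace ℝ (Fin d) => φ ξ * (1 + ‖ξ‖ ^ 2))

/-- The nonlocal functional `F^φ_{δ,ε}`. -/
def Fphi (d : ℕ) (φ : EuclideanSpace ℝ (Fin d) → ℝ) (Ω K : Set (EuclideanSpace ℝ (Fin d)))
    (δ ε : ℝ) (u : EuclideanSpace ℝ (Fin d) → ℝ) : ℝ :=
  (ε ^ (d + 2))⁻¹ * ∫ x in Ω ∩ δ • latSet d K, ∫ y in Ω ∩ δ • latSet d K,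
    φ (ε⁻¹ • (x - y)) * (u x - u y) ^ 2

/-- The nonlocal functional `F_{δ,ε}` with the truncation kernel `χ_{B₁}`. -/
def Fball (d : ℕ) (Ω K : Set (EuclideanSpace ℝ (Fin d))) (δ ε : ℝ)
    (u : EuclideanSpace ℝ (Fin d) → ℝ) : ℝ :=
  (ε ^ (d + 2))⁻¹ *
    ∫ p in ((Ω ∩ δ • latSet d K) ×ˢ (Ω ∩ δ • latSet d K)) ∩
      {p : EuclideanSpace ℝ (Fin d) × EuclideanSpace ℝ (Fin d) | dist p.1 p.2 < ε},
      (u p.1 - u p.2) ^ 2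

/-- Distance between two sets. -/
def setDist {α : Type*} [PseudoMetricSpace α] (A B : Set α) : ℝ :=
  sInf {r : ℝ | ∃ x ∈ A, ∃ y ∈ B, r = dist x y}

/-- `D₀ = inf {dist(K, k+K) : k ∈ ℤ^d, k ≠ 0}`. -/
def D0 (d : ℕ) (K : Set (EuclideanSpace ℝ (Fin d))) : ℝ :=
  sInf {r : ℝ | ∃ k : Fin d → ℤ, k ≠ 0 ∧ r = setDist K (lat d k +ᵥ K)}

set_option maxHeartbeats 2000000 in
/-- estimate of the energy of the piecewise-averaged interpolation of a
Lipschitz function. -/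
theorem stmt_1 (d : ℕ) (hd : 1 ≤ d)
    (K : Set (EuclideanSpace ℝ (Fin d))) (hK : IsAdmissibleK d K)
    (Ω : Set (EuclideanSpace ℝ (Fin d))) (hΩo : IsOpen Ω) (hΩb : Bornology.IsBounded Ω)
    (φ : EuclideanSpace ℝ (Fin d) → ℝ) (φ₀ : ℝ → ℝ) (hφ : IsKernel d φ φ₀)
    (u : EuclideanSpace ℝ (Fin d) → ℝ) (L : NNReal) (hu : LipschitzWith L u)
    (uδ : ℝ → EuclideanSpace ℝ (Fin d) → ℝ)
    (huδ1 : ∀ δ > (0:ℝ), ∀ k : Fin d → ℤ, ∀ x ∈ δ • (lat d k +ᵥ K),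
      uδ δ x = ⨍ y in δ • (lat d k +ᵥ K), u y)
    (huδ2 : ∀ δ > (0:ℝ), ∀ x ∉ δ • latSet d K, uδ δ x = u x) :
    0 < D0 d K ∧
    ∃ C > (0:ℝ), ∀ ε > (0:ℝ), ∀ δ > (0:ℝ),
      Fphi d φ Ω K δ ε (uδ δ) ≤
        C * ∫ ξ in {ξ : EuclideanSpace ℝ (Fin d) | D0 d K * δ / ε ≤ ‖ξ‖},
          φ ξ * ‖ξ‖ ^ 2 := by
  classical
  obtain ⟨⟨U, hUo, hUconn, hUb, hKU⟩, hfr, hdisj⟩ := hK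
  have hUK : U ⊆ K := hKU ▸ subset_closure
  have hKcl : IsClosed K := hKU ▸ isClosed_closure
  have hKb : Bornology.IsBounded K := hKU ▸ hUb.closure
  have hKcomp : IsCompact K := Metric.isCompact_of_isClosed_isBounded hKcl hKb
  have hUne : U.Nonempty := hUconn.nonempty
  have hKne : K.Nonempty := hUne.mono hUK
  have htrans_comp : ∀ k : Fin d → ℤ, IsCompact (lat d k +ᵥ K) := by
    intro k
    rw [← Set.image_vadd]
    exact hKcomp.image (continuous_const_vadd _)
  have htrans_ne : ∀ k : Fin d → ℤ, (lat d k +ᵥ K).Nonempty := fun k => hKne.vadd_set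
  -- coordinate bound
  have hcoord : ∀ (v : EuclideanSpace ℝ (Fin d)) (i : Fin d), |v i| ≤ ‖v‖ := by
    intro v i
    rw [EuclideanSpace.norm_eq]
    refine (Real.le_sqrt (abs_nonneg _) (Finset.sum_nonneg fun j _ => sq_nonneg _)).mpr ?_
    have : ‖v i‖ ^ 2 ≤ ∑ j, ‖v j‖ ^ 2 :=
      Finset.single_le_sum (fun j _ => sq_nonneg ‖v j‖) (Finset.mem_univ i)
    simpa [Real.norm_eq_abs, sq_abs] using this
  have hlat1 : ∀ k : Fin d → ℤ, k ≠ 0 → 1 ≤ ‖lat d k‖ := by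
    intro k hk
    obtain ⟨i, hi⟩ : ∃ i, k i ≠ 0 := by
      by_contra h; push_neg at h; exact hk (funext h)
    have h1 : (1:ℝ) ≤ |(k i : ℝ)| := by
      have := Int.one_le_abs hi
      exact_mod_cast this
    exact le_trans h1 (hcoord (lat d k) i)
  -- setDist facts
  have setDist_le : ∀ (k : Fin d → ℤ), ∀ x ∈ K, ∀ y ∈ lat d k +ᵥ K,
      setDist K (lat d k +ᵥ K) ≤ dist x y := by
    intro k x hx y hy
    refine csInf_le ⟨0, ?_⟩ ⟨x, hx, y, hy, rfl⟩
    rintro r ⟨a, _, b, _, rfl⟩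
    exact dist_nonneg
  have setDist_ge : ∀ (k : Fin d → ℤ) (c : ℝ),
      (∀ x ∈ K, ∀ y ∈ lat d k +ᵥ K, c ≤ dist x y) → c ≤ setDist K (lat d k +ᵥ K) := by
    intro k c h
    obtain ⟨x, hx⟩ := hKne
    obtain ⟨y, hy⟩ := htrans_ne k
    refine le_csInf ⟨_, x, hx, y, hy, rfl⟩ ?_
    rintro r ⟨a, ha, b, hb, rfl⟩
    exact h a ha b hb
  have setDist_nn : ∀ k : Fin d → ℤ, 0 ≤ setDist K (lat d k +ᵥ K) :=
    fun k => setDist_ge k 0 fun _ _ _ _ => dist_nonneg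
  have hD0_le : ∀ k : Fin d → ℤ, k ≠ 0 → D0 d K ≤ setDist K (lat d k +ᵥ K) := by
    intro k hk
    refine csInf_le ⟨0, ?_⟩ ⟨k, hk, rfl⟩
    rintro r ⟨k', _, rfl⟩
    exact setDist_nn k'
  -- positivity of each setDist
  have hsd_pos : ∀ k : Fin d → ℤ, k ≠ 0 → 0 < setDist K (lat d k +ᵥ K) := by
    intro k hk
    obtain ⟨x₀, hx₀, hmin⟩ := hKcomp.exists_isMinOn hKne
      (continuous_infDist_pt (lat d k +ᵥ K)).continuousOn
    have hx₀n : x₀ ∉ lat d k +ᵥ K := fun h => Set.disjoint_left.mp (hdisj k hk) h hx₀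
    have hpos : 0 < infDist x₀ (lat d k +ᵥ K) :=
      ((htrans_comp k).isClosed.notMem_iff_infDist_pos (htrans_ne k)).mp hx₀n
    refine lt_of_lt_of_le hpos (setDist_ge k _ ?_)
    intro x hx y hy
    exact le_trans (hmin hx) (infDist_le_dist_of_mem hy)
  -- radius bound
  obtain ⟨R0, hR0⟩ := hKb.subset_closedBall 0
  have hKR : K ⊆ closedBall 0 (max R0 0) :=
    hR0.trans (closedBall_subset_closedBall (le_max_left _ _))
  set R : ℝ := max R0 0 with hRdef
  have hRnn : 0 ≤ R := le_max_right _ _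
  have hfar : ∀ k : Fin d → ℤ, 2 * R + 1 < ‖lat d k‖ → 1 ≤ setDist K (lat d k +ᵥ K) := by
    intro k hk
    apply setDist_ge
    rintro x hx y ⟨q, hq, rfl⟩
    have hxn : ‖x‖ ≤ R := mem_closedBall_zero_iff.mp (hKR hx)
    have hqn : ‖q‖ ≤ R := mem_closedBall_zero_iff.mp (hKR hq)
    have hkey : ‖lat d k‖ ≤ dist x (lat d k +ᵥ q) + 2 * R := by
      have h1 : ‖lat d k‖ = ‖((lat d k + q) - x) + (x - q)‖ := by
        congr 1
        abel
      rw [h1]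
      calc ‖((lat d k + q) - x) + (x - q)‖ ≤ ‖(lat d k + q) - x‖ + ‖x - q‖ := norm_add_le _ _
        _ ≤ dist x (lat d k + q) + (‖x‖ + ‖q‖) := by
            rw [dist_eq_norm, norm_sub_rev]
            exact add_le_add le_rfl (norm_sub_le _ _)
        _ ≤ dist x (lat d k + q) + 2 * R := by
            have := add_le_add hxn hqn
            linarith
    simp only [vadd_eq_add] at hkey ⊢
    linarith
  -- small lattice points
  set N : ℤ := ⌈(2 * R + 1 : ℝ)⌉ with hNdef
  have hNge : (2 * R + 1 : ℝ) ≤ (N : ℝ) := Int.le_ceil _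
  have hN1 : 1 ≤ N := by
    have : (1:ℝ) ≤ (N:ℝ) := by linarith
    exact_mod_cast this
  have hi0 : (0 : ℕ) < d := hd
  set i0 : Fin d := ⟨0, hi0⟩ with hi0def
  set e : Fin d → ℤ := Pi.single i0 1 with hedef
  have he0 : e ≠ 0 := by
    intro h
    have : e i0 = 0 := by rw [h]; rfl
    rw [hedef, Pi.single_eq_same] at this
    exact one_ne_zero this
  set T : Finset (Fin d → ℤ) :=
    (Finset.Icc (fun _ => -N) (fun _ => N)).filter (fun k => k ≠ 0) with hTdef
  have hmemT : ∀ k : Fin d → ℤ, k ≠ 0 → ‖lat d k‖ ≤ 2 * R + 1 → k ∈ T := by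
    intro k hk hle
    refine Finset.mem_filter.mpr ⟨Finset.mem_Icc.mpr ⟨?_, ?_⟩, hk⟩ <;>
      · intro i
        have h1 : |(k i : ℝ)| ≤ (N : ℝ) := le_trans (le_trans (hcoord (lat d k) i) hle) hNge
        have h2 : |k i| ≤ N := by exact_mod_cast h1
        have := abs_le.mp h2
        simp only [Pi.neg_apply]
        omega
  have hTne : T.Nonempty := by
    refine ⟨e, Finset.mem_filter.mpr ⟨Finset.mem_Icc.mpr ⟨?_, ?_⟩, he0⟩⟩ <;>
      · intro i
        simp only [hedef, Pi.single_apply]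
        split_ifs <;> omega
  set c₀ : ℝ := min 1 (T.inf' hTne fun k => setDist K (lat d k +ᵥ K)) with hc₀def
  have hc₀pos : 0 < c₀ :=
    lt_min one_pos ((Finset.lt_inf'_iff hTne).mpr fun k hk =>
      hsd_pos k (Finset.mem_filter.mp hk).2)
  have hD0pos : 0 < D0 d K := by
    refine lt_of_lt_of_le hc₀pos (le_csInf ⟨_, e, he0, rfl⟩ ?_)
    rintro r ⟨k, hk, rfl⟩
    by_cases hcase : ‖lat d k‖ ≤ 2 * R + 1
    · exact le_trans (min_le_right _ _) (Finset.inf'_le _ (hmemT k hk hcase))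
    · exact le_trans (min_le_left _ _) (hfar k (lt_of_not_ge hcase))
  -- Part 2
  have hM0 : 0 ≤ Metric.diam K := Metric.diam_nonneg
  obtain ⟨hφ0, hφanti, hφrad, hφint⟩ := hφ
  have hφnn : ∀ ξ, 0 ≤ φ ξ := fun ξ => (hφrad ξ) ▸ hφ0 _
  have hφm : AEStronglyMeasurable φ (volume : Measure (EuclideanSpace ℝ (Fin d))) := by
    have h1 : φ = fun ξ => (φ ξ * (1 + ‖ξ‖ ^ 2)) * (1 + ‖ξ‖ ^ 2)⁻¹ := by
      funext ξ
      have h2 : (1:ℝ) + ‖ξ‖ ^ 2 ≠ 0 := by positivity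
      field_simp
    rw [h1]
    exact hφint.aestronglyMeasurable.mul
      ((continuous_const.add (continuous_norm.pow 2)).inv₀
        (fun ξ => (by positivity : (1:ℝ) + ‖ξ‖ ^ 2 ≠ 0))).aestronglyMeasurable
  have hg₀nn : ∀ ξ : EuclideanSpace ℝ (Fin d), 0 ≤ φ ξ * ‖ξ‖ ^ 2 :=
    fun ξ => mul_nonneg (hφnn ξ) (sq_nonneg _)
  have hg₀int : Integrable (fun ξ : EuclideanSpace ℝ (Fin d) => φ ξ * ‖ξ‖ ^ 2) := by
    refine hφint.mono (hφm.mul (continuous_norm.pow 2).aestronglyMeasurable)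
      (ae_of_all _ fun ξ => ?_)
    rw [Real.norm_eq_abs, Real.norm_eq_abs, abs_of_nonneg (hg₀nn ξ),
      abs_of_nonneg (mul_nonneg (hφnn ξ) (by positivity))]
    have h3 : ‖ξ‖ ^ 2 ≤ 1 + ‖ξ‖ ^ 2 := by linarith [sq_nonneg ‖ξ‖]
    exact mul_le_mul_of_nonneg_left h3 (hφnn ξ)
  have hEmeas : MeasurableSet (latSet d K) :=
    MeasurableSet.iUnion fun k => hKcl.measurableSet.const_vadd _
  have hu_cont : Continuous u := hu.continuous
  -- averaging lemma
  have key_avg : ∀ δ > (0:ℝ), ∀ (k : Fin d → ℤ), ∀ x ∈ δ • (lat d k +ᵥ K),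
      |uδ δ x - u x| ≤ (L:ℝ) * (δ * Metric.diam K) := by
    intro δ hδ k x hx
    have hScomp : IsCompact (δ • (lat d k +ᵥ K)) := by
      rw [← Set.image_smul]
      exact (htrans_comp k).image (continuous_const_smul δ)
    have hSdist : ∀ y ∈ δ • (lat d k +ᵥ K), ∀ z ∈ δ • (lat d k +ᵥ K),
        dist y z ≤ δ * Metric.diam K := by
      rintro _ ⟨a, ha, rfl⟩ _ ⟨b, hb, rfl⟩
      obtain ⟨p, hp, rfl⟩ := ha
      obtain ⟨q, hq, rfl⟩ := hb
      rw [dist_smul₀]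
      simp only [vadd_eq_add, dist_add_left, Real.norm_eq_abs, abs_of_pos hδ]
      exact mul_le_mul_of_nonneg_left (Metric.dist_le_diam_of_mem hKb hp hq) hδ.le
    have hSfin : volume (δ • (lat d k +ᵥ K)) < ⊤ := hScomp.measure_lt_top
    have hSpos : 0 < volume (δ • (lat d k +ᵥ K)) := by
      refine lt_of_lt_of_le
        (((hUo.vadd (lat d k)).smul₀ hδ.ne').measure_pos volume (hUne.vadd_set.smul_set))
        (measure_mono ?_)
      exact Set.smul_set_mono (Set.vadd_set_mono hUK)
    have hVpos : 0 < (volume (δ • (lat d k +ᵥ K))).toReal :=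
      ENNReal.toReal_pos hSpos.ne' hSfin.ne
    have hVne : (volume (δ • (lat d k +ᵥ K))).toReal ≠ 0 := hVpos.ne'
    have hiu : IntegrableOn u (δ • (lat d k +ᵥ K)) volume :=
      hu_cont.continuousOn.integrableOn_compact hScomp
    have hbound : ‖∫ y in δ • (lat d k +ᵥ K), (u y - u x)‖ ≤
        ((L:ℝ) * (δ * Metric.diam K)) * (volume (δ • (lat d k +ᵥ K))).toReal := by
      refine norm_setIntegral_le_of_norm_le_const hSfin (fun y hy => ?_)
      rw [Real.norm_eq_abs, ← Real.dist_eq]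
      exact le_trans (hu.dist_le_mul y x)
        (mul_le_mul_of_nonneg_left (hSdist y hy x hx) (NNReal.coe_nonneg L))
    rw [huδ1 δ hδ k x hx, setAverage_eq, measureReal_def]
    have hsub : ∫ y in δ • (lat d k +ᵥ K), (u y - u x) =
        (∫ y in δ • (lat d k +ᵥ K), u y) -
          (volume (δ • (lat d k +ᵥ K))).toReal * u x := by
      rw [integral_sub hiu (integrableOn_const hSfin.ne), setIntegral_const,
        smul_eq_mul, measureReal_def]
    have hexp : (volume (δ • (lat d k +ᵥ K))).toReal⁻¹ • (∫ y in δ • (lat d k +ᵥ K), u y) - u x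
        = (volume (δ • (lat d k +ᵥ K))).toReal⁻¹ * (∫ y in δ • (lat d k +ᵥ K), (u y - u x)) := by
      rw [hsub, smul_eq_mul, mul_sub, ← mul_assoc, inv_mul_cancel₀ hVne, one_mul]
    rw [hexp, abs_mul, abs_of_nonneg (inv_nonneg.mpr hVpos.le)]
    calc (volume (δ • (lat d k +ᵥ K))).toReal⁻¹ * |∫ y in δ • (lat d k +ᵥ K), (u y - u x)|
        ≤ (volume (δ • (lat d k +ᵥ K))).toReal⁻¹ *
          (((L:ℝ) * (δ * Metric.diam K)) * (volume (δ • (lat d k +ᵥ K))).toReal) :=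
          mul_le_mul_of_nonneg_left (by rw [← Real.norm_eq_abs]; exact hbound)
            (inv_nonneg.mpr hVpos.le)
      _ = (L:ℝ) * (δ * Metric.diam K) := by
          rw [mul_comm ((L:ℝ) * (δ * Metric.diam K)), ← mul_assoc, inv_mul_cancel₀ hVne,
            one_mul]
  -- lattice subtraction
  have lat_sub : ∀ k k' : Fin d → ℤ, lat d k' - lat d k = lat d (k' - k) := by
    intro k k'
    ext i
    show (k' i : ℝ) - (k i : ℝ) = ((k' - k) i : ℝ)
    rw [Pi.sub_apply]
    push_cast
    ring
  -- distance between distinct cells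
  have key_dist : ∀ δ > (0:ℝ), ∀ k k' : Fin d → ℤ, k ≠ k' →
      ∀ x ∈ δ • (lat d k +ᵥ K), ∀ y ∈ δ • (lat d k' +ᵥ K), δ * D0 d K ≤ dist x y := by
    intro δ hδ k k' hkk x hx y hy
    obtain ⟨a, ha, rfl⟩ := hx
    obtain ⟨b, hb, rfl⟩ := hy
    obtain ⟨p, hp, rfl⟩ := ha
    obtain ⟨q, hq, rfl⟩ := hb
    rw [dist_smul₀, Real.norm_eq_abs, abs_of_pos hδ]
    refine mul_le_mul_of_nonneg_left ?_ hδ.le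
    have hmem : lat d (k' - k) +ᵥ q ∈ lat d (k' - k) +ᵥ K := ⟨q, hq, rfl⟩
    have h1 : dist (lat d k +ᵥ p) (lat d k' +ᵥ q) = dist p (lat d (k' - k) +ᵥ q) := by
      simp only [vadd_eq_add, dist_eq_norm]
      rw [← lat_sub k k']
      congr 1
      abel
    rw [h1]
    have hne : k' - k ≠ 0 := sub_ne_zero.mpr (Ne.symm hkk)
    exact le_trans (hD0_le _ hne) (setDist_le _ p hp _ hmem)
  -- conclusion
  refine ⟨hD0pos, (volume Ω).toReal * ((L:ℝ) * (1 + 2 * Metric.diam K / D0 d K)) ^ 2 + 1,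
    by positivity, ?_⟩
  intro ε hε δ hδ
  set C₁ : ℝ := (L:ℝ) * (1 + 2 * Metric.diam K / D0 d K) with hC₁def
  have hC₁0 : 0 ≤ C₁ := by positivity
  have hAmeas : MeasurableSet (Ω ∩ δ • latSet d K) :=
    hΩo.measurableSet.inter (hEmeas.const_smul₀ δ)
  have hAvol : volume (Ω ∩ δ • latSet d K) < ⊤ :=
    lt_of_le_of_lt (measure_mono Set.inter_subset_left) hΩb.measure_lt_top
  have hS₁meas : MeasurableSet {ξ : EuclideanSpace ℝ (Fin d) | D0 d K * δ / ε ≤ ‖ξ‖} :=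
    (isClosed_le continuous_const continuous_norm).measurableSet
  set G : EuclideanSpace ℝ (Fin d) → ℝ :=
    Set.indicator {ξ : EuclideanSpace ℝ (Fin d) | D0 d K * δ / ε ≤ ‖ξ‖}
      (fun ξ => φ ξ * ‖ξ‖ ^ 2) with hGdef
  have hGnn : ∀ ξ, 0 ≤ G ξ := fun ξ => Set.indicator_nonneg (fun ξ _ => hg₀nn ξ) ξ
  have hGint : Integrable G := hg₀int.indicator hS₁meas
  set J : ℝ := ∫ ξ in {ξ : EuclideanSpace ℝ (Fin d) | D0 d K * δ / ε ≤ ‖ξ‖},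
    φ ξ * ‖ξ‖ ^ 2 with hJdef
  have hJG : ∫ ξ, G ξ = J := integral_indicator hS₁meas
  have hJnn : 0 ≤ J := setIntegral_nonneg hS₁meas (fun ξ _ => hg₀nn ξ)
  set Hf : EuclideanSpace ℝ (Fin d) → ℝ := fun z => (C₁ ^ 2 * ε ^ 2) * G (ε⁻¹ • z) with hHfdef
  have hHnn : ∀ z, 0 ≤ Hf z := fun z => mul_nonneg (by positivity) (hGnn _)
  have hHint : Integrable Hf :=
    ((integrable_comp_smul_iff volume G (inv_ne_zero hε.ne')).mpr hGint).const_mul _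
  have hHB : ∫ z, Hf z = C₁ ^ 2 * ε ^ 2 * (ε ^ d * J) := by
    simp only [hHfdef]
    rw [MeasureTheory.integral_const_mul]
    rw [Measure.integral_comp_smul volume G ε⁻¹, finrank_euclideanSpace_fin, inv_pow, inv_inv,
      abs_of_pos (pow_pos hε d), smul_eq_mul, hJG]
  -- pointwise bound
  have key_pt : ∀ x ∈ δ • latSet d K, ∀ y ∈ δ • latSet d K,
      φ (ε⁻¹ • (x - y)) * (uδ δ x - uδ δ y) ^ 2 ≤ Hf (x - y) := by
    intro x hx y hy
    rw [show δ • latSet d K = ⋃ k : Fin d → ℤ, δ • (lat d k +ᵥ K) by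
      rw [latSet, Set.smul_set_iUnion]] at hx hy
    rw [Set.mem_iUnion] at hx hy
    obtain ⟨k, hk⟩ := hx
    obtain ⟨k', hk'⟩ := hy
    by_cases hkk : k = k'
    · subst hkk
      rw [huδ1 δ hδ k x hk, huδ1 δ hδ k y hk', sub_self]
      simpa using hHnn (x - y)
    · have hdist := key_dist δ hδ k k' hkk x hk y hk'
      rw [dist_eq_norm] at hdist
      have hxyne : (0:ℝ) < ‖x - y‖ := lt_of_lt_of_le (by positivity) hdist
      have hmemS₁ : ε⁻¹ • (x - y) ∈ {ξ : EuclideanSpace ℝ (Fin d) | D0 d K * δ / ε ≤ ‖ξ‖} := by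
        show D0 d K * δ / ε ≤ ‖ε⁻¹ • (x - y)‖
        rw [norm_smul, Real.norm_eq_abs, abs_of_pos (inv_pos.mpr hε)]
        rw [div_eq_mul_inv, mul_comm (ε⁻¹)]
        exact mul_le_mul_of_nonneg_right (by linarith [hdist, mul_comm δ (D0 d K)])
          (inv_nonneg.mpr hε.le)
      have hεne0 : (ε:ℝ) ≠ 0 := hε.ne'
      have hHval : Hf (x - y) = C₁ ^ 2 * (φ (ε⁻¹ • (x - y)) * ‖x - y‖ ^ 2) := by
        simp only [hHfdef, hGdef, Set.indicator_of_mem hmemS₁, norm_smul, Real.norm_eq_abs,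
          abs_of_pos (inv_pos.mpr hε), mul_pow]
        field_simp
      rw [hHval]
      have hub : |uδ δ x - uδ δ y| ≤ C₁ * ‖x - y‖ := by
        have h1 := key_avg δ hδ k x hk
        have h2 := key_avg δ hδ k' y hk'
        have h3 : |u x - u y| ≤ (L:ℝ) * ‖x - y‖ := by
          rw [← Real.dist_eq, ← dist_eq_norm]
          exact hu.dist_le_mul x y
        have hδle : δ * Metric.diam K ≤ ‖x - y‖ / D0 d K * Metric.diam K := by
          apply mul_le_mul_of_nonneg_right _ hM0
          rw [le_div_iff₀ hD0pos]
          linarith [hdist]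
        have habs : |uδ δ x - uδ δ y| ≤
            |uδ δ x - u x| + |u x - u y| + |u y - uδ δ y| := by
          have t1 : uδ δ x - uδ δ y = (uδ δ x - u x) + (u x - u y) + (u y - uδ δ y) := by ring
          rw [t1]
          exact le_trans (abs_add_le _ _) (add_le_add_left (abs_add_le _ _) _)
        have h2' : |u y - uδ δ y| ≤ (L:ℝ) * (δ * Metric.diam K) := by
          rw [abs_sub_comm]
          exact h2
        have hfrac : (L:ℝ) * (δ * Metric.diam K) ≤
            (L:ℝ) * (Metric.diam K / D0 d K) * ‖x - y‖ := by
          calc (L:ℝ) * (δ * Metric.diam K)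
              ≤ (L:ℝ) * (‖x - y‖ / D0 d K * Metric.diam K) :=
                mul_le_mul_of_nonneg_left hδle (NNReal.coe_nonneg L)
            _ = (L:ℝ) * (Metric.diam K / D0 d K) * ‖x - y‖ := by ring
        calc |uδ δ x - uδ δ y| ≤ |uδ δ x - u x| + |u x - u y| + |u y - uδ δ y| := habs
          _ ≤ (L:ℝ) * (δ * Metric.diam K) + (L:ℝ) * ‖x - y‖ +
              (L:ℝ) * (δ * Metric.diam K) := add_le_add (add_le_add h1 h3) h2'
          _ ≤ (L:ℝ) * (Metric.diam K / D0 d K) * ‖x - y‖ + (L:ℝ) * ‖x - y‖ +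
              (L:ℝ) * (Metric.diam K / D0 d K) * ‖x - y‖ :=
            add_le_add (add_le_add hfrac le_rfl) hfrac
          _ = C₁ * ‖x - y‖ := by rw [hC₁def]; ring
      have hsq : (uδ δ x - uδ δ y) ^ 2 ≤ (C₁ * ‖x - y‖) ^ 2 := by
        rw [← sq_abs (uδ δ x - uδ δ y)]
        exact pow_le_pow_left₀ (abs_nonneg _) hub 2
      calc φ (ε⁻¹ • (x - y)) * (uδ δ x - uδ δ y) ^ 2
          ≤ φ (ε⁻¹ • (x - y)) * (C₁ * ‖x - y‖) ^ 2 :=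
            mul_le_mul_of_nonneg_left hsq (hφnn _)
        _ = C₁ ^ 2 * (φ (ε⁻¹ • (x - y)) * ‖x - y‖ ^ 2) := by ring
  -- inner integral estimate
  have hinner : ∀ x ∈ Ω ∩ δ • latSet d K,
      (∫ y in Ω ∩ δ • latSet d K, φ (ε⁻¹ • (x - y)) * (uδ δ x - uδ δ y) ^ 2) ≤
        C₁ ^ 2 * ε ^ 2 * (ε ^ d * J) := by
    intro x hxA
    have hHx : Integrable (fun y => Hf (x - y)) := (integrable_comp_sub_left Hf x).mpr hHint
    calc (∫ y in Ω ∩ δ • latSet d K, φ (ε⁻¹ • (x - y)) * (uδ δ x - uδ δ y) ^ 2)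
        ≤ ∫ y in Ω ∩ δ • latSet d K, Hf (x - y) := by
          apply integral_mono_of_nonneg
          · exact ae_of_all _ fun y => mul_nonneg (hφnn _) (sq_nonneg _)
          · exact hHx.restrict
          · exact (ae_restrict_mem hAmeas).mono fun y hy => key_pt x hxA.2 y hy.2
      _ ≤ ∫ y, Hf (x - y) := setIntegral_le_integral hHx (ae_of_all _ fun y => hHnn _)
      _ = ∫ z, Hf z := integral_sub_left_eq_self Hf volume x
      _ = C₁ ^ 2 * ε ^ 2 * (ε ^ d * J) := hHB
  have hBnn : 0 ≤ C₁ ^ 2 * ε ^ 2 * (ε ^ d * J) :=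
    mul_nonneg (by positivity) (mul_nonneg (by positivity) hJnn)
  -- outer integral estimate
  have houter : (∫ x in Ω ∩ δ • latSet d K, ∫ y in Ω ∩ δ • latSet d K,
      φ (ε⁻¹ • (x - y)) * (uδ δ x - uδ δ y) ^ 2) ≤
      (volume Ω).toReal * (C₁ ^ 2 * ε ^ 2 * (ε ^ d * J)) := by
    calc (∫ x in Ω ∩ δ • latSet d K, ∫ y in Ω ∩ δ • latSet d K,
          φ (ε⁻¹ • (x - y)) * (uδ δ x - uδ δ y) ^ 2)
        ≤ ∫ _x in Ω ∩ δ • latSet d K, C₁ ^ 2 * ε ^ 2 * (ε ^ d * J) := by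
          apply integral_mono_of_nonneg
          · exact ae_of_all _ fun x => integral_nonneg fun y =>
              mul_nonneg (hφnn _) (sq_nonneg _)
          · exact integrableOn_const hAvol.ne
          · exact (ae_restrict_mem hAmeas).mono fun x hx => hinner x hx
      _ = (volume (Ω ∩ δ • latSet d K)).toReal * (C₁ ^ 2 * ε ^ 2 * (ε ^ d * J)) := by
          rw [setIntegral_const, smul_eq_mul, measureReal_def]
      _ ≤ (volume Ω).toReal * (C₁ ^ 2 * ε ^ 2 * (ε ^ d * J)) := by
          exact mul_le_mul_of_nonneg_right
            (ENNReal.toReal_mono hΩb.measure_lt_top.ne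
              (measure_mono Set.inter_subset_left)) hBnn
  -- final arithmetic
  have hεne : (ε : ℝ) ^ (d + 2) ≠ 0 := pow_ne_zero _ hε.ne'
  have hfinal : Fphi d φ Ω K δ ε (uδ δ) ≤ (volume Ω).toReal * C₁ ^ 2 * J := by
    rw [Fphi]
    have h1 : (ε ^ (d + 2))⁻¹ * (∫ x in Ω ∩ δ • latSet d K, ∫ y in Ω ∩ δ • latSet d K,
        φ (ε⁻¹ • (x - y)) * (uδ δ x - uδ δ y) ^ 2) ≤
        (ε ^ (d + 2))⁻¹ * ((volume Ω).toReal * (C₁ ^ 2 * ε ^ 2 * (ε ^ d * J))) :=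
      mul_le_mul_of_nonneg_left houter (inv_nonneg.mpr (pow_nonneg hε.le _))
    refine le_trans h1 (le_of_eq ?_)
    rw [pow_add]
    field_simp
  refine le_trans hfinal ?_
  have hcoef : (volume Ω).toReal * C₁ ^ 2 ≤ (volume Ω).toReal * C₁ ^ 2 + 1 := by linarith
  calc (volume Ω).toReal * C₁ ^ 2 * J ≤ ((volume Ω).toReal * C₁ ^ 2 + 1) * J :=
      mul_le_mul_of_nonneg_right hcoef hJnn
    _ = ((volume Ω).toReal * C₁ ^ 2 + 1) *
        ∫ ξ in {ξ : EuclideanSpace ℝ (Fin d) | D0 d K * δ / ε ≤ ‖ξ‖}, φ ξ * ‖ξ‖ ^ 2 := by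
      rw [hJdef]
end
end

section
/- Assume in addition that φ(ξ) = 0 whenever |ξ| > 1. Set D₀ = inf{dist(K, k+K) : k ∈ ℤ^d, k ≠ 0} > 0, and suppose δ : (0,∞) → (0,∞) satisfies δ(ε) → 0 as ε → 0⁺ and ε < D₀ δ(ε) for every ε. Then for every u ∈ L²(Ω) there exists a family (u_ε) ⊂ L²(Ω) such that F^φ_{δ(ε),ε}(u_ε) = 0 for every ε and u_ε → u strongly in L²(Ω) as ε → 0⁺. -/
open MeasureTheory Filter Metric Set Pointwise
open scoped Topology ENNReal NNReal

noncomputable section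

lemma lat_sub (d : ℕ) (k l : Fin d → ℤ) : lat d (k - l) = lat d k - lat d l := by
  ext i
  simp [lat]

lemma cell_unique {d : ℕ} {K : Set (EuclideanSpace ℝ (Fin d))}
    (hdisj : ∀ k : Fin d → ℤ, k ≠ 0 → Disjoint (lat d k +ᵥ K) K)
    {z : EuclideanSpace ℝ (Fin d)} {k l : Fin d → ℤ}
    (hk : z ∈ lat d k +ᵥ K) (hl : z ∈ lat d l +ᵥ K) : k = l := by
  by_contra hne
  obtain ⟨a, ha, hka⟩ := hk
  obtain ⟨b, hb, hlb⟩ := hl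
  simp only [vadd_eq_add] at hka hlb
  have hmem : b ∈ lat d (k - l) +ᵥ K := by
    refine ⟨a, ha, ?_⟩
    show lat d (k - l) + a = b
    rw [lat_sub]
    have h : lat d k + a = lat d l + b := by rw [hka, hlb]
    rw [eq_sub_of_add_eq' h.symm]
    abel
  exact Set.disjoint_left.mp (hdisj (k - l) (sub_ne_zero.2 hne)) hmem hb

lemma setDist_nonneg {d : ℕ} {A B : Set (EuclideanSpace ℝ (Fin d))}
    (hA : A.Nonempty) (hB : B.Nonempty) : 0 ≤ setDist A B := by
  apply le_csInf
  · obtain ⟨a, ha⟩ := hA; obtain ⟨b, hb⟩ := hB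
    exact ⟨dist a b, a, ha, b, hb, rfl⟩
  · rintro r ⟨x, _, y, _, rfl⟩
    exact dist_nonneg

lemma D0_le_dist {d : ℕ} {K : Set (EuclideanSpace ℝ (Fin d))} (hKne : K.Nonempty)
    {x y : EuclideanSpace ℝ (Fin d)} {k l : Fin d → ℤ}
    (hk : x ∈ lat d k +ᵥ K) (hl : y ∈ lat d l +ᵥ K) (hne : k ≠ l) :
    D0 d K ≤ dist x y := by
  obtain ⟨a, ha, hka⟩ := hk
  obtain ⟨b, hb, hlb⟩ := hl
  simp only [vadd_eq_add] at hka hlb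
  have hdxy : dist x y = dist a (lat d (l - k) +ᵥ b) := by
    rw [← hka, ← hlb, lat_sub, vadd_eq_add]
    rw [dist_eq_norm, dist_eq_norm]
    congr 1
    abel
  have h1 : setDist K (lat d (l - k) +ᵥ K) ≤ dist x y := by
    rw [hdxy]
    apply csInf_le
    · refine ⟨0, ?_⟩
      rintro r ⟨p, _, q, _, rfl⟩
      exact dist_nonneg
    · exact ⟨a, ha, lat d (l - k) +ᵥ b, ⟨b, hb, rfl⟩, rfl⟩

  have h2 : D0 d K ≤ setDist K (lat d (l - k) +ᵥ K) := by
    apply csInf_le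
    · refine ⟨0, ?_⟩
      rintro r ⟨m, hm, rfl⟩
      obtain ⟨c, hc⟩ := id hKne
      exact setDist_nonneg hKne ⟨lat d m +ᵥ c, c, hc, rfl⟩
    · exact ⟨l - k, sub_ne_zero.2 (Ne.symm hne), rfl⟩
  linarith


open Classical in
def cellIdx (d : ℕ) (K : Set (EuclideanSpace ℝ (Fin d))) (z : EuclideanSpace ℝ (Fin d)) :
    Fin d → ℤ :=
  if h : ∃ k : Fin d → ℤ, z ∈ lat d k +ᵥ K then h.choose else 0

lemma cellIdx_mem {d : ℕ} {K : Set (EuclideanSpace ℝ (Fin d))} {z : EuclideanSpace ℝ (Fin d)}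
    (h : ∃ k : Fin d → ℤ, z ∈ lat d k +ᵥ K) : z ∈ lat d (cellIdx d K z) +ᵥ K := by
  rw [cellIdx, dif_pos h]
  exact h.choose_spec

lemma cellIdx_eq {d : ℕ} {K : Set (EuclideanSpace ℝ (Fin d))}
    (hdisj : ∀ k : Fin d → ℤ, k ≠ 0 → Disjoint (lat d k +ᵥ K) K)
    {z : EuclideanSpace ℝ (Fin d)} {k : Fin d → ℤ} (h : z ∈ lat d k +ᵥ K) :
    cellIdx d K z = k :=
  cell_unique hdisj (cellIdx_mem ⟨k, h⟩) h

lemma sq_integral_le {α : Type*} [MeasurableSpace α] {μ : Measure α} {f : α → ℝ}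
    (hf : MemLp f 2 μ) {s : ℝ} (hs : 0 ≤ s)
    (h : eLpNorm f 2 μ ≤ ENNReal.ofReal s) : ∫ x, f x ^ 2 ∂μ ≤ s ^ 2 := by
  have hint : Integrable (fun x => f x ^ 2) μ := hf.integrable_sq
  have h1 : ENNReal.ofReal (∫ x, f x ^ 2 ∂μ) = ∫⁻ x, ENNReal.ofReal (f x ^ 2) ∂μ :=
    ofReal_integral_eq_lintegral_ofReal hint (ae_of_all _ fun x => sq_nonneg _)
  have h2 : ∀ x, ENNReal.ofReal (f x ^ 2) = (‖f x‖₊ : ℝ≥0∞) ^ (2 : ℕ) := by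
    intro x
    rw [← sq_abs, ENNReal.ofReal_pow (abs_nonneg _), ← enorm_eq_nnnorm, Real.enorm_eq_ofReal_abs]
  have h3 : eLpNorm f 2 μ ^ (2 : ℕ) = ∫⁻ x, (‖f x‖₊ : ℝ≥0∞) ^ (2 : ℕ) ∂μ := by
    rw [eLpNorm_eq_lintegral_rpow_enorm_toReal two_ne_zero ENNReal.ofNat_ne_top,
      ← ENNReal.rpow_natCast _ 2, ← ENNReal.rpow_mul]
    norm_num
    rfl
  have h4 : ENNReal.ofReal (∫ x, f x ^ 2 ∂μ) ≤ ENNReal.ofReal (s ^ 2) := by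
    rw [h1]
    simp_rw [h2]
    rw [← h3, ENNReal.ofReal_pow hs]
    gcongr
  exact (ENNReal.ofReal_le_ofReal_iff (by positivity)).1 h4

lemma sq_triangle {a b c s : ℝ} (h : (a - b) ^ 2 ≤ s) :
    (a - c) ^ 2 ≤ 2 * s + 2 * (b - c) ^ 2 := by
  nlinarith [sq_nonneg (a - 2 * b + c)]

lemma abs_bound_of_compactSupport {E : Type*} [NormedAddCommGroup E] {g : E → ℝ}
    (hc : Continuous g) (hs : HasCompactSupport g) : ∃ C, ∀ x, |g x| ≤ C := by
  obtain ⟨C, hC⟩ := (isBounded_iff_forall_norm_le).1 (hs.isCompact_range hc).isBounded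
  exact ⟨C, fun x => hC _ (Set.mem_range_self x)⟩

set_option maxHeartbeats 1000000

/-- for compactly supported kernels, if `ε < D₀ δ(ε)`, every `u ∈ L²(Ω)`
is approximated in `L²(Ω)` by functions of zero energy. -/
theorem stmt_2 (d : ℕ) (hd : 1 ≤ d)
    (K : Set (EuclideanSpace ℝ (Fin d))) (hK : IsAdmissibleK d K)
    (Ω : Set (EuclideanSpace ℝ (Fin d))) (hΩo : IsOpen Ω) (hΩb : Bornology.IsBounded Ω)
    (φ : EuclideanSpace ℝ (Fin d) → ℝ) (φ₀ : ℝ → ℝ) (hφ : IsKernel d φ φ₀)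
    (hsupp : ∀ ξ : EuclideanSpace ℝ (Fin d), 1 < ‖ξ‖ → φ ξ = 0)
    (δ : ℝ → ℝ) (hδpos : ∀ ε > (0:ℝ), 0 < δ ε)
    (hδ0 : Tendsto δ (𝓝[>] (0:ℝ)) (𝓝 0))
    (hδlt : ∀ ε > (0:ℝ), ε < D0 d K * δ ε) :
    ∀ u : EuclideanSpace ℝ (Fin d) → ℝ, MemLp u 2 (volume.restrict Ω) →
      ∃ uε : ℝ → EuclideanSpace ℝ (Fin d) → ℝ,
        (∀ ε > (0:ℝ), MemLp (uε ε) 2 (volume.restrict Ω)) ∧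
        (∀ ε > (0:ℝ), Fphi d φ Ω K (δ ε) ε (uε ε) = 0) ∧
        Tendsto (fun ε => ∫ x in Ω, (uε ε x - u x) ^ 2) (𝓝[>] (0:ℝ)) (𝓝 0) := by
  intro u hu
  classical
  obtain ⟨⟨U, hUo, hUconn, hUb, hKU⟩, hfr, hdisj⟩ := hK
  have hKne : K.Nonempty := by
    rw [hKU]; exact hUconn.nonempty.mono subset_closure
  obtain ⟨x₀, hx₀⟩ := id hKne
  have hKb : Bornology.IsBounded K := by rw [hKU]; exact hUb.closure
  have hKclosed : IsClosed K := by rw [hKU]; exact isClosed_closure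
  obtain ⟨R, hR⟩ := isBounded_iff_forall_norm_le.1 hKb
  have hR0 : 0 ≤ R := le_trans (norm_nonneg x₀) (hR x₀ hx₀)
  set R' : ℝ := 2 * R + 1 with hR'def
  have hR' : 0 < R' := by positivity
  have hΩm : MeasurableSet Ω := hΩo.measurableSet
  have hvolΩ : volume Ω < ⊤ := hΩb.measure_lt_top
  haveI : IsFiniteMeasure (volume.restrict Ω) :=
    ⟨by rwa [Measure.restrict_apply_univ]⟩
  have husm := hu.1
  set u' : EuclideanSpace ℝ (Fin d) → ℝ := husm.mk u with hu'def
  have huu' : u =ᵐ[volume.restrict Ω] u' := husm.ae_eq_mk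
  have hu' : MemLp u' 2 (volume.restrict Ω) := hu.ae_eq huu'
  have hubar : MemLp (Ω.indicator u') 2 volume := (memLp_indicator_iff_restrict hΩm).2 hu'
  -- approximating sequence of continuous compactly supported functions
  have hex : ∀ n : ℕ, ∃ g : EuclideanSpace ℝ (Fin d) → ℝ, HasCompactSupport g ∧
      eLpNorm (Ω.indicator u' - g) 2 volume ≤ ENNReal.ofReal (Real.sqrt (1 / (n + 1))) ∧
      Continuous g ∧ MemLp g 2 volume := by
    intro n
    refine hubar.exists_hasCompactSupport_eLpNorm_sub_le ENNReal.ofNat_ne_top ?_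
    exact (ENNReal.ofReal_pos.2 (Real.sqrt_pos.2 (by positivity))).ne'
  choose g hgsupp hgapprox hgcont hgmem using hex
  have hexζ : ∀ n : ℕ, ∃ ζ, 0 < ζ ∧ ∀ a b : EuclideanSpace ℝ (Fin d), dist a b < ζ →
      |g n a - g n b| < Real.sqrt (1 / (n + 1)) := by
    intro n
    have hunif : UniformContinuous (g n) :=
      (hgsupp n).uniformContinuous_of_continuous (hgcont n)
    obtain ⟨ζ, hζ0, hζ⟩ := Metric.uniformContinuous_iff.1 hunif (Real.sqrt (1 / (n + 1)))
      (Real.sqrt_pos.2 (by positivity))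
    exact ⟨ζ, hζ0, fun a b hab => by simpa [Real.dist_eq] using hζ hab⟩
  choose ζ hζ0 hζ using hexζ
  obtain hexC := fun n => abs_bound_of_compactSupport (hgcont n) (hgsupp n)
  choose C hC using hexC
  -- the construction
  set T : ℝ → Set (EuclideanSpace ℝ (Fin d)) := fun ε => δ ε • latSet d K with hT
  set Nf : ℝ → ℕ := fun ε => sSup {n : ℕ | n ≤ ⌈ε⁻¹⌉₊ ∧ δ ε * R' < ζ n} with hNf
  set w : ℝ → (Fin d → ℤ) → ℝ := fun ε k => g (Nf ε) (δ ε • (lat d k + x₀)) with hwdef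
  set F : ℝ → EuclideanSpace ℝ (Fin d) → ℝ :=
    fun ε x => if x ∈ T ε then w ε (cellIdx d K ((δ ε)⁻¹ • x)) else 0 with hFdef
  set v : ℝ → EuclideanSpace ℝ (Fin d) → ℝ :=
    fun ε x => F ε x + (T ε)ᶜ.indicator u' x with hvdef
  -- membership and value facts
  have hmemT : ∀ ε, 0 < ε → ∀ x : EuclideanSpace ℝ (Fin d),
      x ∈ T ε ↔ ∃ k : Fin d → ℤ, (δ ε)⁻¹ • x ∈ lat d k +ᵥ K := by
    intro ε hε x
    show x ∈ δ ε • latSet d K ↔ _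
    rw [Set.mem_smul_set_iff_inv_smul_mem₀ (hδpos ε hε).ne', latSet, Set.mem_iUnion]
  have hvalT : ∀ ε x, x ∈ T ε → v ε x = w ε (cellIdx d K ((δ ε)⁻¹ • x)) := by
    intro ε x hx
    have hxc : x ∉ (T ε)ᶜ := by simpa using hx
    simp only [hvdef, hFdef, if_pos hx, Set.indicator_of_notMem hxc, add_zero]
  have hvalTc : ∀ ε x, x ∉ T ε → v ε x = u' x := by
    intro ε x hx
    simp only [hvdef, hFdef, if_neg hx, Set.indicator_of_mem (Set.mem_compl hx), zero_add]
  -- measurability of the cells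
  have hcell : ∀ ε, 0 < ε → ∀ k : Fin d → ℤ,
      MeasurableSet (δ ε • (lat d k +ᵥ K)) := by
    intro ε hε k
    have heq : δ ε • (lat d k +ᵥ K)
        = (fun x : EuclideanSpace ℝ (Fin d) => -lat d k + (δ ε)⁻¹ • x) ⁻¹' K := by
      ext x
      rw [Set.mem_smul_set_iff_inv_smul_mem₀ (hδpos ε hε).ne',
        Set.mem_vadd_set_iff_neg_vadd_mem]
      rfl
    rw [heq]
    exact (continuous_const.add (continuous_const_smul _)).measurable hKclosed.measurableSet
  have hTmeas : ∀ ε, 0 < ε → MeasurableSet (T ε) := by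
    intro ε hε
    have heq : T ε = ⋃ k : Fin d → ℤ, δ ε • (lat d k +ᵥ K) := by
      show δ ε • latSet d K = _
      rw [latSet, Set.smul_set_iUnion]
    rw [heq]
    exact MeasurableSet.iUnion fun k => hcell ε hε k
  -- measurability of F
  have hFmeas : ∀ ε, 0 < ε → Measurable (F ε) := by
    intro ε hε
    intro s hs
    have hpre : F ε ⁻¹' s =
        (⋃ k ∈ {k : Fin d → ℤ | w ε k ∈ s}, δ ε • (lat d k +ᵥ K)) ∪
          (if (0 : ℝ) ∈ s then (T ε)ᶜ else ∅) := by
      ext x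
      by_cases hx : x ∈ T ε
      · obtain ⟨k, hk⟩ := (hmemT ε hε x).1 hx
        have hidx : cellIdx d K ((δ ε)⁻¹ • x) = k := cellIdx_eq hdisj hk
        have hxcell : x ∈ δ ε • (lat d k +ᵥ K) :=
          (Set.mem_smul_set_iff_inv_smul_mem₀ (hδpos ε hε).ne' _ _).2 hk
        simp only [Set.mem_preimage, hFdef, if_pos hx, hidx, Set.mem_union, Set.mem_iUnion,
          Set.mem_setOf_eq]
        constructor
        · intro h
          exact Or.inl ⟨k, h, hxcell⟩
        · rintro (⟨l, hl, hxl⟩ | hright)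
          · have hmem : (δ ε)⁻¹ • x ∈ lat d l +ᵥ K :=
              (Set.mem_smul_set_iff_inv_smul_mem₀ (hδpos ε hε).ne' _ _).1 hxl
            rwa [cell_unique hdisj hk hmem]
          · split_ifs at hright with h0
            · exact absurd hx (by simpa using hright)
            · exact absurd hright (Set.notMem_empty x)
      · simp only [Set.mem_preimage, hFdef, if_neg hx, Set.mem_union, Set.mem_iUnion,
          Set.mem_setOf_eq]
        constructor
        · intro h0
          right
          rw [if_pos h0]
          simpa using hx
        · rintro (⟨l, hl, hxl⟩ | hright)
          · exfalso
            apply hx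
            exact (hmemT ε hε x).2
              ⟨l, (Set.mem_smul_set_iff_inv_smul_mem₀ (hδpos ε hε).ne' _ _).1 hxl⟩
          · split_ifs at hright with h0
            · exact h0
            · exact absurd hright (Set.notMem_empty x)
    rw [hpre]
    refine MeasurableSet.union ?_ ?_
    · exact MeasurableSet.biUnion (Set.to_countable _) fun k _ => hcell ε hε k
    · split_ifs
      · exact (hTmeas ε hε).compl
      · exact MeasurableSet.empty
  -- MemLp
  have hmemv : ∀ ε, 0 < ε → MemLp (v ε) 2 (volume.restrict Ω) := by
    intro ε hε
    have h1 : MemLp (F ε) 2 (volume.restrict Ω) := by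
      refine MemLp.of_bound (hFmeas ε hε).aestronglyMeasurable (max (C (Nf ε)) 0) ?_
      refine ae_of_all _ fun x => ?_
      rw [Real.norm_eq_abs]
      simp only [hFdef]
      split_ifs
      · exact le_max_of_le_left (hC _ _)
      · simp
    have h2 : MemLp ((T ε)ᶜ.indicator u') 2 (volume.restrict Ω) :=
      hu'.indicator (hTmeas ε hε).compl
    exact h1.add h2
  -- zero energy
  have hFzero : ∀ ε, 0 < ε → Fphi d φ Ω K (δ ε) ε (v ε) = 0 := by
    intro ε hε
    have hδe := hδpos ε hε
    have hzero : ∀ x ∈ Ω ∩ δ ε • latSet d K, ∀ y ∈ Ω ∩ δ ε • latSet d K,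
        φ (ε⁻¹ • (x - y)) * (v ε x - v ε y) ^ 2 = 0 := by
      intro x hx y hy
      have hxT : x ∈ T ε := hx.2
      have hyT : y ∈ T ε := hy.2
      obtain ⟨k, hk⟩ := (hmemT ε hε x).1 hxT
      obtain ⟨l, hl⟩ := (hmemT ε hε y).1 hyT
      have hkx : cellIdx d K ((δ ε)⁻¹ • x) = k := cellIdx_eq hdisj hk
      have hly : cellIdx d K ((δ ε)⁻¹ • y) = l := cellIdx_eq hdisj hl
      by_cases hkl : k = l
      · have hxy : v ε x = v ε y := by
          rw [hvalT ε x hxT, hvalT ε y hyT, hkx, hly, hkl]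
        rw [hxy]
        ring
      · have hD : D0 d K ≤ dist ((δ ε)⁻¹ • x) ((δ ε)⁻¹ • y) := D0_le_dist hKne hk hl hkl
        have hdist : dist x y = δ ε * dist ((δ ε)⁻¹ • x) ((δ ε)⁻¹ • y) := by
          conv_lhs => rw [← smul_inv_smul₀ hδe.ne' x, ← smul_inv_smul₀ hδe.ne' y]
          rw [dist_smul₀, Real.norm_of_nonneg hδe.le]
        have hεd : ε < dist x y := by
          calc ε < D0 d K * δ ε := hδlt ε hε
          _ ≤ dist ((δ ε)⁻¹ • x) ((δ ε)⁻¹ • y) * δ ε :=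
              mul_le_mul_of_nonneg_right hD hδe.le
          _ = dist x y := by rw [hdist]; ring
        have hnorm : 1 < ‖ε⁻¹ • (x - y)‖ := by
          rw [norm_smul, Real.norm_eq_abs, abs_of_nonneg (inv_nonneg.2 hε.le), ← dist_eq_norm]
          calc (1:ℝ) = ε⁻¹ * ε := (inv_mul_cancel₀ hε.ne').symm
          _ < ε⁻¹ * dist x y := by
              exact mul_lt_mul_of_pos_left hεd (inv_pos.2 hε)
        rw [hsupp _ hnorm, zero_mul]
    rw [Fphi]
    rw [setIntegral_eq_zero_of_forall_eq_zero fun x hx =>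
      setIntegral_eq_zero_of_forall_eq_zero fun y hy => hzero x hx y hy, mul_zero]
  refine ⟨v, fun ε hε => hmemv ε hε, fun ε hε => hFzero ε hε, ?_⟩
  -- convergence
  have hcongr : (fun ε => ∫ x in Ω, (v ε x - u x) ^ 2)
      = fun ε => ∫ x in Ω, (v ε x - u' x) ^ 2 :=
    funext fun ε => integral_congr_ae (by filter_upwards [huu'] with x hx; rw [hx])
  rw [hcongr, Metric.tendsto_nhds]
  intro θ hθ
  set A := (volume Ω).toReal with hA
  have hA0 : 0 ≤ A := ENNReal.toReal_nonneg
  obtain ⟨n₀, hn₀⟩ : ∃ n₀ : ℕ, 2 * A + 2 < θ * (n₀ + 1) := by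
    obtain ⟨n₀, h⟩ := exists_nat_gt ((2 * A + 2) / θ)
    refine ⟨n₀, ?_⟩
    rw [div_lt_iff₀ hθ] at h
    nlinarith
  have hev1 : ∀ᶠ ε in 𝓝[>] (0:ℝ), δ ε * R' < ζ n₀ := by
    have h := hδ0.eventually (eventually_lt_nhds (div_pos (hζ0 n₀) hR'))
    exact h.mono fun ε hh => (lt_div_iff₀ hR').1 hh
  have hev2 : ∀ᶠ ε in 𝓝[>] (0:ℝ), ε < 1 / ((n₀:ℝ) + 1) :=
    Filter.Eventually.filter_mono nhdsWithin_le_nhds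
      (eventually_lt_nhds (show (0:ℝ) < 1 / ((n₀:ℝ) + 1) by positivity))
  filter_upwards [self_mem_nhdsWithin, hev1, hev2] with ε hε h1 h2
  replace hε : 0 < ε := hε
  have hδe := hδpos ε hε
  have hceil : n₀ ≤ ⌈ε⁻¹⌉₊ := by
    have h3 : ε * ((n₀:ℝ) + 1) < 1 := (lt_div_iff₀ (by positivity)).1 h2
    have h4 : (n₀:ℝ) < ε⁻¹ := by nlinarith [mul_inv_cancel₀ hε.ne']
    exact (Nat.lt_ceil.2 h4).le
  have hmem0 : n₀ ∈ {n : ℕ | n ≤ ⌈ε⁻¹⌉₊ ∧ δ ε * R' < ζ n} := ⟨hceil, h1⟩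
  have hbdd : BddAbove {n : ℕ | n ≤ ⌈ε⁻¹⌉₊ ∧ δ ε * R' < ζ n} := ⟨⌈ε⁻¹⌉₊, fun m hm => hm.1⟩
  have hNmem : Nf ε ∈ {n : ℕ | n ≤ ⌈ε⁻¹⌉₊ ∧ δ ε * R' < ζ n} := Nat.sSup_mem ⟨n₀, hmem0⟩ hbdd
  have hNge : n₀ ≤ Nf ε := le_csSup hbdd hmem0
  have hδζ : δ ε * R' < ζ (Nf ε) := hNmem.2
  -- pointwise bound
  have hpt : ∀ x ∈ Ω, (v ε x - u' x) ^ 2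
      ≤ 2 * (1 / ((Nf ε : ℝ) + 1)) + 2 * (g (Nf ε) x - u' x) ^ 2 := by
    intro x _
    by_cases hx : x ∈ T ε
    · obtain ⟨k, hk⟩ := (hmemT ε hε x).1 hx
      have hkx : cellIdx d K ((δ ε)⁻¹ • x) = k := cellIdx_eq hdisj hk
      have hvx : v ε x = g (Nf ε) (δ ε • (lat d k + x₀)) := by
        rw [hvalT ε x hx, hkx]
      obtain ⟨z, hz, hzx⟩ := hk
      simp only [vadd_eq_add] at hzx
      have hdR : dist x₀ z ≤ 2 * R := by
        rw [dist_eq_norm]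
        calc ‖x₀ - z‖ ≤ ‖x₀‖ + ‖z‖ := norm_sub_le _ _
        _ ≤ R + R := add_le_add (hR x₀ hx₀) (hR z hz)
        _ = 2 * R := by ring
      have hdista : dist (δ ε • (lat d k + x₀)) x < ζ (Nf ε) := by
        have hx' : x = δ ε • ((δ ε)⁻¹ • x) := (smul_inv_smul₀ hδe.ne' x).symm
        calc dist (δ ε • (lat d k + x₀)) x
            = δ ε * dist (lat d k + x₀) ((δ ε)⁻¹ • x) := by
              conv_lhs => rw [hx']
              rw [dist_smul₀, Real.norm_of_nonneg hδe.le]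
          _ = δ ε * dist x₀ z := by rw [← hzx, dist_add_left]
          _ ≤ δ ε * (2 * R) := mul_le_mul_of_nonneg_left hdR hδe.le
          _ < ζ (Nf ε) := by
              calc δ ε * (2 * R) < δ ε * R' := by
                    rw [hR'def]; nlinarith
                _ < ζ (Nf ε) := hδζ
      have habs : |g (Nf ε) (δ ε • (lat d k + x₀)) - g (Nf ε) x|
          < Real.sqrt (1 / ((Nf ε : ℝ) + 1)) := hζ (Nf ε) _ _ hdista
      have hsq : (v ε x - g (Nf ε) x) ^ 2 ≤ 1 / ((Nf ε : ℝ) + 1) := by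
        rw [hvx, ← sq_abs]
        calc |g (Nf ε) (δ ε • (lat d k + x₀)) - g (Nf ε) x| ^ 2
            ≤ Real.sqrt (1 / ((Nf ε : ℝ) + 1)) ^ 2 := by
              apply pow_le_pow_left₀ (abs_nonneg _) habs.le
          _ = 1 / ((Nf ε : ℝ) + 1) := Real.sq_sqrt (by positivity)
      exact sq_triangle hsq
    · rw [hvalTc ε x hx]
      have h0 : (u' x - u' x) ^ 2 = 0 := by ring
      rw [h0]
      positivity
  -- integral estimates
  have hg2 : MemLp (g (Nf ε)) 2 (volume.restrict Ω) := (hgmem (Nf ε)).restrict Ω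
  have hint1 : Integrable (fun x => (v ε x - u' x) ^ 2) (volume.restrict Ω) :=
    ((hmemv ε hε).sub hu').integrable_sq
  have hint2 : Integrable (fun x => (g (Nf ε) x - u' x) ^ 2) (volume.restrict Ω) :=
    (hg2.sub hu').integrable_sq
  have hint3 : Integrable
      (fun x => 2 * (1 / ((Nf ε : ℝ) + 1)) + 2 * (g (Nf ε) x - u' x) ^ 2) (volume.restrict Ω) :=
    (integrable_const _).add (hint2.const_mul 2)
  have hle1 : ∫ x in Ω, (v ε x - u' x) ^ 2
      ≤ ∫ x in Ω, (2 * (1 / ((Nf ε : ℝ) + 1)) + 2 * (g (Nf ε) x - u' x) ^ 2) :=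
    setIntegral_mono_on hint1 hint3 hΩm hpt
  have heq2 : ∫ x in Ω, (2 * (1 / ((Nf ε : ℝ) + 1)) + 2 * (g (Nf ε) x - u' x) ^ 2)
      = 2 * (1 / ((Nf ε : ℝ) + 1)) * A + 2 * ∫ x in Ω, (g (Nf ε) x - u' x) ^ 2 := by
    rw [integral_add (integrable_const _) (hint2.const_mul 2), integral_const,
      integral_const_mul]
    rw [measureReal_restrict_apply_univ, Measure.real, ← hA]
    rw [smul_eq_mul]
    ring
  have hgu : ∫ x in Ω, (g (Nf ε) x - u' x) ^ 2 ≤ 1 / ((Nf ε : ℝ) + 1) := by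
    have hfun : (fun x => (g (Nf ε) x - u' x) ^ 2) = fun x => (u' x - g (Nf ε) x) ^ 2 :=
      funext fun x => by ring
    rw [hfun]
    have hmem' : MemLp (fun x => u' x - g (Nf ε) x) 2 (volume.restrict Ω) := hu'.sub hg2
    have hel : eLpNorm (fun x => u' x - g (Nf ε) x) 2 (volume.restrict Ω)
        ≤ ENNReal.ofReal (Real.sqrt (1 / ((Nf ε : ℝ) + 1))) := by
      have he1 : eLpNorm (fun x => u' x - g (Nf ε) x) 2 (volume.restrict Ω)
          = eLpNorm (Ω.indicator u' - g (Nf ε)) 2 (volume.restrict Ω) := by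
        apply eLpNorm_congr_ae
        filter_upwards [(ae_restrict_iff' hΩm).2
          (ae_of_all _ fun x (hx : x ∈ Ω) => Set.indicator_of_mem hx u')] with x hx
        simp only [Pi.sub_apply, hx]
      rw [he1]
      exact (eLpNorm_mono_measure _ Measure.restrict_le_self).trans (hgapprox (Nf ε))
    calc ∫ x in Ω, (u' x - g (Nf ε) x) ^ 2
        ≤ Real.sqrt (1 / ((Nf ε : ℝ) + 1)) ^ 2 := sq_integral_le hmem' (Real.sqrt_nonneg _) hel
      _ = 1 / ((Nf ε : ℝ) + 1) := Real.sq_sqrt (by positivity)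
  have hIbound : ∫ x in Ω, (v ε x - u' x) ^ 2 ≤ (2 * A + 2) / ((Nf ε : ℝ) + 1) := by
    have hNn : (0:ℝ) < (Nf ε : ℝ) + 1 := by positivity
    have hstep : ∫ x in Ω, (v ε x - u' x) ^ 2
        ≤ 2 * (1 / ((Nf ε : ℝ) + 1)) * A + 2 * (1 / ((Nf ε : ℝ) + 1)) := by
      calc ∫ x in Ω, (v ε x - u' x) ^ 2
          ≤ 2 * (1 / ((Nf ε : ℝ) + 1)) * A + 2 * ∫ x in Ω, (g (Nf ε) x - u' x) ^ 2 := by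
            rw [← heq2]; exact hle1
        _ ≤ 2 * (1 / ((Nf ε : ℝ) + 1)) * A + 2 * (1 / ((Nf ε : ℝ) + 1)) := by linarith [hgu]
    calc ∫ x in Ω, (v ε x - u' x) ^ 2 ≤ 2 * (1 / ((Nf ε : ℝ) + 1)) * A + 2 * (1 / ((Nf ε : ℝ) + 1)) := hstep
      _ = (2 * A + 2) / ((Nf ε : ℝ) + 1) := by rw [← mul_one_div (2 * A + 2)]; ring
  have hmono : (2 * A + 2) / ((Nf ε : ℝ) + 1) ≤ (2 * A + 2) / ((n₀ : ℝ) + 1) := by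
    apply div_le_div_of_nonneg_left (by linarith) (by positivity)
    exact_mod_cast Nat.succ_le_succ hNge
  have hlast : (2 * A + 2) / ((n₀ : ℝ) + 1) < θ := by
    rw [div_lt_iff₀ (by positivity)]
    nlinarith
  have hpos : 0 ≤ ∫ x in Ω, (v ε x - u' x) ^ 2 := integral_nonneg fun x => sq_nonneg _
  rw [Real.dist_eq, sub_zero, abs_of_nonneg hpos]
  linarith
end
end

section
/- Let k̂ ∈ ℤ^d \ {0} and τ > 0, and let δ, ε > 0 satisfy dist(K, K + k̂) + 2τ ≤ ε/δ. Then there exists a constant C, depending only on d, K, k̂ and τ, such that for every u ∈ L²(ℝ^d), writing u_k for the average of u over δ(k + K) (k ∈ ℤ^d), one has |u_0 − u_{k̂}|² ≤ C δ^{−2d} ( ∬_{δK × δK} |u(x) − u(y)|² dx dy + ∬_{{(x,y) ∈ δK × δ(K+k̂) : |x−y| < ε}} |u(x) − u(y)|² dx dy + ∬_{δ(K+k̂) × δ(K+k̂)} |u(x) − u(y)|² dx dy ). -/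
open MeasureTheory Filter Metric Set Pointwise
open scoped Topology ENNReal NNReal

noncomputable section

section Helpers

variable {α : Type*} [MeasurableSpace α] {μ ν : Measure α} {u : α → ℝ}

private lemma sq_sub_fun_eq (u : α → ℝ) :
    (fun p : α × α => (u p.1 - u p.2) ^ 2)
      = fun p => (u p.1 ^ 2 * 1 - 2 * (u p.1 * u p.2)) + 1 * u p.2 ^ 2 := by
  funext p; ring

private lemma prodIntegrable [IsFiniteMeasure μ] [IsFiniteMeasure ν]
    (hu1 : Integrable u μ) (hu2 : Integrable (fun x => u x ^ 2) μ)
    (hv1 : Integrable u ν) (hv2 : Integrable (fun x => u x ^ 2) ν) :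
    Integrable (fun p : α × α => (u p.1 - u p.2) ^ 2) (μ.prod ν) := by
  rw [sq_sub_fun_eq]
  exact ((hu2.mul_prod (integrable_const 1)).sub ((hu1.mul_prod hv1).const_mul 2)).add
    ((integrable_const 1).mul_prod hv2)

private lemma prodIdentity [IsFiniteMeasure μ] [IsFiniteMeasure ν]
    (hu1 : Integrable u μ) (hu2 : Integrable (fun x => u x ^ 2) μ)
    (hv1 : Integrable u ν) (hv2 : Integrable (fun x => u x ^ 2) ν) :
    ∫ p : α × α, (u p.1 - u p.2) ^ 2 ∂(μ.prod ν)
      = (ν Set.univ).toReal * (∫ x, u x ^ 2 ∂μ)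
        - 2 * ((∫ x, u x ∂μ) * (∫ x, u x ∂ν))
        + (μ Set.univ).toReal * (∫ x, u x ^ 2 ∂ν) := by
  have h1 : Integrable (fun p : α × α => u p.1 ^ 2 * 1) (μ.prod ν) :=
    hu2.mul_prod (integrable_const 1)
  have h2 : Integrable (fun p : α × α => u p.1 * u p.2) (μ.prod ν) := hu1.mul_prod hv1
  have h3 : Integrable (fun p : α × α => 1 * u p.2 ^ 2) (μ.prod ν) :=
    (integrable_const 1).mul_prod hv2
  have h2' : Integrable (fun p : α × α => 2 * (u p.1 * u p.2)) (μ.prod ν) := h2.const_mul 2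
  have h12 : Integrable (fun p : α × α => u p.1 ^ 2 * 1 - 2 * (u p.1 * u p.2)) (μ.prod ν) :=
    h1.sub h2'
  rw [sq_sub_fun_eq u, integral_add h12 h3, integral_sub h1 h2', integral_const_mul,
    integral_prod_mul,
    integral_prod_mul (f := fun x => u x ^ 2) (g := fun _ => (1:ℝ)),
    integral_prod_mul (f := fun _ => (1:ℝ)) (g := fun x => u x ^ 2)]
  simp only [integral_const, smul_eq_mul, mul_one, one_mul, Measure.real]
  ring

private lemma alg_avg (m n a b Ia Ib : ℝ) (hm : 0 < m) (hn : 0 < n)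
    (ha : a ^ 2 ≤ m * Ia) (hb : b ^ 2 ≤ n * Ib) :
    (m⁻¹ * a - n⁻¹ * b) ^ 2 ≤ (m * n)⁻¹ * (n * Ia - 2 * (a * b) + m * Ib) := by
  have key : (n * a - m * b) ^ 2 ≤ (m * n) * (n * Ia - 2 * (a * b) + m * Ib) := by
    nlinarith [mul_nonneg (mul_nonneg hn.le hn.le) (sub_nonneg.2 ha),
      mul_nonneg (mul_nonneg hm.le hm.le) (sub_nonneg.2 hb)]
  have hm0 : m ≠ 0 := hm.ne'
  have hn0 : n ≠ 0 := hn.ne'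
  have heq : m⁻¹ * a - n⁻¹ * b = (n * a - m * b) / (m * n) := by
    field_simp
  rw [heq, div_pow, div_le_iff₀ (by positivity)]
  calc (n * a - m * b) ^ 2 ≤ (m * n) * (n * Ia - 2 * (a * b) + m * Ib) := key
    _ = (m * n)⁻¹ * (n * Ia - 2 * (a * b) + m * Ib) * (m * n) ^ 2 := by
        field_simp

private lemma avg_sub_sq_le [IsFiniteMeasure μ] [IsFiniteMeasure ν]
    (hμ : 0 < (μ Set.univ).toReal) (hν : 0 < (ν Set.univ).toReal)
    (hu1 : Integrable u μ) (hu2 : Integrable (fun x => u x ^ 2) μ)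
    (hv1 : Integrable u ν) (hv2 : Integrable (fun x => u x ^ 2) ν) :
    ((⨍ x, u x ∂μ) - ⨍ x, u x ∂ν) ^ 2 ≤
      ((μ Set.univ).toReal * (ν Set.univ).toReal)⁻¹ *
        ∫ p : α × α, (u p.1 - u p.2) ^ 2 ∂(μ.prod ν) := by
  have ha : (∫ x, u x ∂μ) ^ 2 ≤ (μ Set.univ).toReal * ∫ x, u x ^ 2 ∂μ := by
    have h0 : 0 ≤ ∫ p : α × α, (u p.1 - u p.2) ^ 2 ∂(μ.prod μ) :=
      integral_nonneg fun p => sq_nonneg _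
    rw [prodIdentity hu1 hu2 hu1 hu2] at h0
    nlinarith
  have hb : (∫ x, u x ∂ν) ^ 2 ≤ (ν Set.univ).toReal * ∫ x, u x ^ 2 ∂ν := by
    have h0 : 0 ≤ ∫ p : α × α, (u p.1 - u p.2) ^ 2 ∂(ν.prod ν) :=
      integral_nonneg fun p => sq_nonneg _
    rw [prodIdentity hv1 hv2 hv1 hv2] at h0
    nlinarith
  rw [prodIdentity hu1 hu2 hv1 hv2, average_eq, average_eq, smul_eq_mul, smul_eq_mul]
  exact alg_avg _ _ _ _ _ _ hμ hν ha hb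

end Helpers

section Euclid

variable {d : ℕ}

private lemma restrict_prod_eq (A B : Set (EuclideanSpace ℝ (Fin d))) :
    (volume : Measure (EuclideanSpace ℝ (Fin d) × EuclideanSpace ℝ (Fin d))).restrict (A ×ˢ B)
      = (volume.restrict A).prod (volume.restrict B) := by
  rw [Measure.volume_eq_prod, ← Measure.prod_restrict]

private lemma finiteRestrict {A : Set (EuclideanSpace ℝ (Fin d))} (hAt : volume A ≠ ⊤) :
    IsFiniteMeasure (volume.restrict A) :=
  ⟨by rwa [Measure.restrict_apply_univ, lt_top_iff_ne_top]⟩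

private lemma pair_integrableOn {u : EuclideanSpace ℝ (Fin d) → ℝ} (hu : MemLp u 2 volume)
    (A B : Set (EuclideanSpace ℝ (Fin d))) (hAt : volume A ≠ ⊤) (hBt : volume B ≠ ⊤) :
    IntegrableOn (fun p : EuclideanSpace ℝ (Fin d) × EuclideanSpace ℝ (Fin d) =>
      (u p.1 - u p.2) ^ 2) (A ×ˢ B) volume := by
  haveI := finiteRestrict hAt
  haveI := finiteRestrict hBt
  have h := prodIntegrable ((hu.restrict A).integrable one_le_two) (hu.restrict A).integrable_sq
    ((hu.restrict B).integrable one_le_two) (hu.restrict B).integrable_sq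
  rw [← restrict_prod_eq] at h
  exact h

private lemma pair_bound {u : EuclideanSpace ℝ (Fin d) → ℝ} (hu : MemLp u 2 volume)
    (A B : Set (EuclideanSpace ℝ (Fin d)))
    (hA0 : volume A ≠ 0) (hAt : volume A ≠ ⊤) (hB0 : volume B ≠ 0) (hBt : volume B ≠ ⊤) :
    ((⨍ x in A, u x) - ⨍ x in B, u x) ^ 2 ≤
      ((volume A).toReal * (volume B).toReal)⁻¹ *
        ∫ p in A ×ˢ B, (u p.1 - u p.2) ^ 2 := by
  haveI := finiteRestrict hAt
  haveI := finiteRestrict hBt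
  have h := avg_sub_sq_le (μ := volume.restrict A) (ν := volume.restrict B)
    (by rw [Measure.restrict_apply_univ]; exact ENNReal.toReal_pos hA0 hAt)
    (by rw [Measure.restrict_apply_univ]; exact ENNReal.toReal_pos hB0 hBt)
    ((hu.restrict A).integrable one_le_two) (hu.restrict A).integrable_sq
    ((hu.restrict B).integrable one_le_two) (hu.restrict B).integrable_sq
  rw [Measure.restrict_apply_univ, Measure.restrict_apply_univ] at h
  have hre : (∫ p in A ×ˢ B, (u p.1 - u p.2) ^ 2)
      = ∫ p : EuclideanSpace ℝ (Fin d) × EuclideanSpace ℝ (Fin d), (u p.1 - u p.2) ^ 2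
          ∂((volume.restrict A).prod (volume.restrict B)) := by
    rw [restrict_prod_eq]
  rw [hre]
  exact h

end Euclid



private lemma three_term_sq (x1 y1 y2 x2 : ℝ) :
    (x1 - x2) ^ 2 ≤ 3 * ((x1 - y1) ^ 2 + (y1 - y2) ^ 2 + (y2 - x2) ^ 2) := by
  nlinarith [sq_nonneg (x1 - y1 - (y1 - y2)), sq_nonneg (y1 - y2 - (y2 - x2)),
    sq_nonneg (x1 - y1 - (y2 - x2))]

set_option maxHeartbeats 1000000 in
/-- estimate of the difference of cell averages via short- and long-range
interaction energies. -/
theorem stmt_4 (d : ℕ) (hd : 1 ≤ d)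
    (K : Set (EuclideanSpace ℝ (Fin d))) (hK : IsAdmissibleK d K)
    (khat : Fin d → ℤ) (hkhat : khat ≠ 0) (τ : ℝ) (hτ : 0 < τ) :
    ∃ C > (0:ℝ), ∀ δ > (0:ℝ), ∀ ε > (0:ℝ),
      setDist K (lat d khat +ᵥ K) + 2 * τ ≤ ε / δ →
      ∀ u : EuclideanSpace ℝ (Fin d) → ℝ, MemLp u 2 volume →
        ((⨍ x in δ • K, u x) - ⨍ x in δ • (lat d khat +ᵥ K), u x) ^ 2 ≤
          C * (δ ^ (2 * d))⁻¹ *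
            ((∫ p in (δ • K) ×ˢ (δ • K),
                (u p.1 - u p.2) ^ 2) +
             (∫ p in ((δ • K) ×ˢ (δ • (lat d khat +ᵥ K))) ∩
                {p : EuclideanSpace ℝ (Fin d) × EuclideanSpace ℝ (Fin d) | dist p.1 p.2 < ε},
                (u p.1 - u p.2) ^ 2) +
             (∫ p in (δ • (lat d khat +ᵥ K)) ×ˢ (δ • (lat d khat +ᵥ K)),
                (u p.1 - u p.2) ^ 2)) := by
  obtain ⟨⟨U, hUopen, hUconn, hUbdd, hKU⟩, -, -⟩ := hK
  have hUK : U ⊆ K := hKU ▸ subset_closure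
  have hKcomp : IsCompact K :=
    Metric.isCompact_of_isClosed_isBounded (hKU ▸ isClosed_closure) (hKU ▸ hUbdd.closure)
  have hKne : K.Nonempty := hUconn.nonempty.mono hUK
  set L : EuclideanSpace ℝ (Fin d) := lat d khat with hLdef
  have hSne : {r : ℝ | ∃ x ∈ K, ∃ y ∈ L +ᵥ K, r = dist x y}.Nonempty := by
    obtain ⟨x, hx⟩ := hKne
    exact ⟨dist x (L +ᵥ x), x, hx, L +ᵥ x, Set.vadd_mem_vadd_set hx, rfl⟩
  obtain ⟨r₀, hr₀mem, hr₀lt⟩ := Real.lt_sInf_add_pos hSne (show (0:ℝ) < τ/4 by linarith)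
  obtain ⟨a, haK, bb, hbK, rfl⟩ := hr₀mem
  rw [Set.mem_vadd_set] at hbK
  obtain ⟨b₀, hb₀K, rfl⟩ := hbK
  obtain ⟨a', ha'U, haa'⟩ := Metric.mem_closure_iff.1 (hKU ▸ haK) (τ/4) (by linarith)
  obtain ⟨b', hb'U, hbb'⟩ := Metric.mem_closure_iff.1 (hKU ▸ hb₀K) (τ/4) (by linarith)
  obtain ⟨ra, hra, hba⟩ := Metric.isOpen_iff.1 hUopen a' ha'U
  obtain ⟨rb, hrb, hbb⟩ := Metric.isOpen_iff.1 hUopen b' hb'U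
  set r : ℝ := min (min ra rb) (τ/8) with hrdef
  have hr : 0 < r := lt_min (lt_min hra hrb) (by linarith)
  have hrτ : r ≤ τ/8 := min_le_right _ _
  have hPU : ball a' r ⊆ U :=
    (ball_subset_ball ((min_le_left _ _).trans (min_le_left _ _))).trans hba
  have hQU : ball b' r ⊆ U :=
    (ball_subset_ball ((min_le_left _ _).trans (min_le_right _ _))).trans hbb
  have hballK : ball a' r ⊆ K := hPU.trans hUK
  have hballK' : ball b' r ⊆ K := hQU.trans hUK
  have hvolK_ne : volume K ≠ 0 := fun h =>
    (measure_ball_pos volume a' hr).ne' (measure_mono_null hballK h)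
  have hvolK_top : volume K ≠ ⊤ := hKcomp.measure_lt_top.ne
  set vK := (volume K).toReal with hvKdef
  set vP := (volume (ball a' r)).toReal with hvPdef
  set vQ := (volume (ball b' r)).toReal with hvQdef
  have hvK : 0 < vK := ENNReal.toReal_pos hvolK_ne hvolK_top
  have hvP : 0 < vP :=
    ENNReal.toReal_pos (measure_ball_pos volume a' hr).ne' measure_ball_lt_top.ne
  have hvQ : 0 < vQ :=
    ENNReal.toReal_pos (measure_ball_pos volume b' hr).ne' measure_ball_lt_top.ne
  set m : ℝ := min vK (min vP vQ) with hmdef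
  have hm : 0 < m := lt_min hvK (lt_min hvP hvQ)
  have hm1 : m ≤ vK := min_le_left _ _
  have hm2 : m ≤ vP := (min_le_right _ _).trans (min_le_left _ _)
  have hm3 : m ≤ vQ := (min_le_right _ _).trans (min_le_right _ _)
  refine ⟨3 * (m * m)⁻¹, by positivity, ?_⟩
  intro δ hδ ε hε hdist u hu
  simp only [setDist] at hdist
  have hδd : (0:ℝ) < δ ^ d := pow_pos hδ d
  have hsc : ∀ S : Set (EuclideanSpace ℝ (Fin d)),
      volume (δ • S) = ENNReal.ofReal (δ ^ d) * volume S := by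
    intro S
    rw [Measure.addHaar_smul_of_nonneg volume hδ.le S, finrank_euclideanSpace_fin]
  have htr : ∀ S : Set (EuclideanSpace ℝ (Fin d)), volume S ≠ ⊤ →
      (volume (δ • S)).toReal = δ ^ d * (volume S).toReal := by
    intro S hS
    rw [hsc S, ENNReal.toReal_mul, ENNReal.toReal_ofReal hδd.le]
  have hne : ∀ S : Set (EuclideanSpace ℝ (Fin d)), volume S ≠ 0 → volume (δ • S) ≠ 0 := by
    intro S hS
    rw [hsc S]
    exact mul_ne_zero (ENNReal.ofReal_pos.2 hδd).ne' hS
  have htop : ∀ S : Set (EuclideanSpace ℝ (Fin d)), volume S ≠ ⊤ → volume (δ • S) ≠ ⊤ := by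
    intro S hS
    rw [hsc S]
    exact ENNReal.mul_ne_top ENNReal.ofReal_ne_top hS
  have hvolLK : volume (L +ᵥ K) = volume K := measure_vadd volume L K
  have hvolLQ : volume (L +ᵥ ball b' r) = volume (ball b' r) := measure_vadd volume L (ball b' r)
  have hLKne : volume (L +ᵥ K) ≠ 0 := by rw [hvolLK]; exact hvolK_ne
  have hLKtop : volume (L +ᵥ K) ≠ ⊤ := by rw [hvolLK]; exact hvolK_top
  have hLQne : volume (L +ᵥ ball b' r) ≠ 0 := by
    rw [hvolLQ]; exact (measure_ball_pos volume b' hr).ne'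
  have hLQtop : volume (L +ᵥ ball b' r) ≠ ⊤ := by
    rw [hvolLQ]; exact measure_ball_lt_top.ne
  set A : Set (EuclideanSpace ℝ (Fin d)) := δ • K with hAdef
  set A' : Set (EuclideanSpace ℝ (Fin d)) := δ • ball a' r with hA'def
  set B : Set (EuclideanSpace ℝ (Fin d)) := δ • (L +ᵥ K) with hBdef
  set B' : Set (EuclideanSpace ℝ (Fin d)) := δ • (L +ᵥ ball b' r) with hB'def
  have hA'A : A' ⊆ A := smul_set_mono hballK
  have hB'B : B' ⊆ B := smul_set_mono (vadd_set_mono (hQU.trans hUK))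
  -- subset with distance constraint
  have hsub2 : A' ×ˢ B' ⊆ (A ×ˢ B) ∩
      {p : EuclideanSpace ℝ (Fin d) × EuclideanSpace ℝ (Fin d) | dist p.1 p.2 < ε} := by
    rintro ⟨x, y⟩ ⟨hx, hy⟩
    refine ⟨⟨hA'A hx, hB'B hy⟩, ?_⟩
    rw [hA'def, Set.mem_smul_set] at hx
    rw [hB'def, Set.mem_smul_set] at hy
    obtain ⟨p, hp, rfl⟩ := hx
    obtain ⟨q, hq, rfl⟩ := hy
    rw [Set.mem_vadd_set] at hq
    obtain ⟨q₀, hq₀, rfl⟩ := hq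
    have h1 : dist p a' < r := mem_ball.1 hp
    have h2 : dist q₀ b' < r := mem_ball.1 hq₀
    have hd1 : dist p (L +ᵥ q₀) ≤
        dist p a' + dist a' (L +ᵥ b') + dist (L +ᵥ b') (L +ᵥ q₀) := dist_triangle4 _ _ _ _
    have hd2 : dist a' (L +ᵥ b') ≤
        dist a' a + dist a (L +ᵥ b₀) + dist (L +ᵥ b₀) (L +ᵥ b') := dist_triangle4 _ _ _ _
    have e1 : dist (L +ᵥ b') (L +ᵥ q₀) = dist b' q₀ := by
      simp only [vadd_eq_add, dist_add_left]
    have e2 : dist (L +ᵥ b₀) (L +ᵥ b') = dist b₀ b' := by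
      simp only [vadd_eq_add, dist_add_left]
    have e3 : dist a' a = dist a a' := dist_comm _ _
    have e4 : dist b' q₀ = dist q₀ b' := dist_comm _ _
    have hpq : dist p (L +ᵥ q₀) <
        sInf {r : ℝ | ∃ x ∈ K, ∃ y ∈ L +ᵥ K, r = dist x y} + 2 * τ := by
      rw [e1, e4] at hd1
      rw [e2, e3] at hd2
      linarith
    have hεδ : dist p (L +ᵥ q₀) < ε / δ := lt_of_lt_of_le hpq hdist
    show dist (δ • p) (δ • (L +ᵥ q₀)) < ε
    rw [dist_smul₀, Real.norm_eq_abs, abs_of_pos hδ]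
    calc δ * dist p (L +ᵥ q₀) < δ * (ε / δ) := by
          exact mul_lt_mul_of_pos_left hεδ hδ
      _ = ε := by field_simp
  -- integrability on the three big sets
  have hIone := pair_integrableOn hu A A (htop K hvolK_top) (htop K hvolK_top)
  have hItwo := pair_integrableOn hu A B (htop K hvolK_top) (htop _ hLKtop)
  have hIthree := pair_integrableOn hu B B (htop _ hLKtop) (htop _ hLKtop)
  -- shorthand for the three integrals
  set I1 := ∫ p in A ×ˢ A, (u p.1 - u p.2) ^ 2 with hI1def
  set I2 := ∫ p in (A ×ˢ B) ∩
      {p : EuclideanSpace ℝ (Fin d) × EuclideanSpace ℝ (Fin d) | dist p.1 p.2 < ε},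
      (u p.1 - u p.2) ^ 2 with hI2def
  set I3 := ∫ p in B ×ˢ B, (u p.1 - u p.2) ^ 2 with hI3def
  -- monotonicity of set integrals
  have hnonneg : ∀ p : EuclideanSpace ℝ (Fin d) × EuclideanSpace ℝ (Fin d),
      (0:ℝ) ≤ (u p.1 - u p.2) ^ 2 := fun p => sq_nonneg _
  have hmono1 : (∫ p in A ×ˢ A', (u p.1 - u p.2) ^ 2) ≤ I1 :=
    setIntegral_mono_set hIone (Filter.Eventually.of_forall hnonneg)
      (HasSubset.Subset.eventuallyLE (Set.prod_mono_right hA'A))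
  have hmono2 : (∫ p in A' ×ˢ B', (u p.1 - u p.2) ^ 2) ≤ I2 :=
    setIntegral_mono_set (hItwo.mono_set Set.inter_subset_left)
      (Filter.Eventually.of_forall hnonneg) (HasSubset.Subset.eventuallyLE hsub2)
  have hmono3 : (∫ p in B' ×ˢ B, (u p.1 - u p.2) ^ 2) ≤ I3 :=
    setIntegral_mono_set hIthree (Filter.Eventually.of_forall hnonneg)
      (HasSubset.Subset.eventuallyLE (Set.prod_mono_left hB'B))
  -- coefficient bound
  have hcoef : ∀ X Y : ℝ, 0 < X → 0 < Y → m ≤ X → m ≤ Y →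
      ((δ ^ d * X) * (δ ^ d * Y))⁻¹ ≤ (m * m)⁻¹ * (δ ^ (2 * d))⁻¹ := by
    intro X Y hX hY hmX hmY
    rw [← mul_inv]
    apply inv_anti₀ (by positivity)
    have hdd : δ ^ (2 * d) = δ ^ d * δ ^ d := by rw [two_mul, pow_add]
    rw [hdd]
    calc m * m * (δ ^ d * δ ^ d) = (δ ^ d * m) * (δ ^ d * m) := by ring
      _ ≤ (δ ^ d * X) * (δ ^ d * Y) :=
          mul_le_mul (mul_le_mul_of_nonneg_left hmX hδd.le)
            (mul_le_mul_of_nonneg_left hmY hδd.le) (by positivity) (by positivity)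
  -- three pairwise bounds
  have hb1 := pair_bound hu A A' (hne K hvolK_ne) (htop K hvolK_top)
    (hne _ (measure_ball_pos volume a' hr).ne') (htop _ measure_ball_lt_top.ne)
  have hb2 := pair_bound hu A' B'
    (hne _ (measure_ball_pos volume a' hr).ne') (htop _ measure_ball_lt_top.ne)
    (hne _ hLQne) (htop _ hLQtop)
  have hb3 := pair_bound hu B' B (hne _ hLQne) (htop _ hLQtop)
    (hne _ hLKne) (htop _ hLKtop)
  -- rewrite volumes
  have hvA : (volume A).toReal = δ ^ d * vK := htr K hvolK_top
  have hvA' : (volume A').toReal = δ ^ d * vP := htr _ measure_ball_lt_top.ne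
  have hvB : (volume B).toReal = δ ^ d * vK := by
    rw [hBdef, htr _ hLKtop, hvolLK]
  have hvB' : (volume B').toReal = δ ^ d * vQ := by
    rw [hB'def, htr _ hLQtop, hvolLQ]
  rw [hvA, hvA'] at hb1
  rw [hvA', hvB'] at hb2
  rw [hvB', hvB] at hb3
  have hT1 : ((⨍ x in A, u x) - ⨍ x in A', u x) ^ 2 ≤
      (m * m)⁻¹ * (δ ^ (2 * d))⁻¹ * I1 :=
    hb1.trans (mul_le_mul (hcoef vK vP hvK hvP hm1 hm2) hmono1
      (integral_nonneg hnonneg) (by positivity))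
  have hT2 : ((⨍ x in A', u x) - ⨍ x in B', u x) ^ 2 ≤
      (m * m)⁻¹ * (δ ^ (2 * d))⁻¹ * I2 :=
    hb2.trans (mul_le_mul (hcoef vP vQ hvP hvQ hm2 hm3) hmono2
      (integral_nonneg hnonneg) (by positivity))
  have hT3 : ((⨍ x in B', u x) - ⨍ x in B, u x) ^ 2 ≤
      (m * m)⁻¹ * (δ ^ (2 * d))⁻¹ * I3 :=
    hb3.trans (mul_le_mul (hcoef vQ vK hvQ hvK hm3 hm1) hmono3
      (integral_nonneg hnonneg) (by positivity))
  have h3 : ((⨍ x in A, u x) - ⨍ x in B, u x) ^ 2 ≤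
      3 * (((⨍ x in A, u x) - ⨍ x in A', u x) ^ 2
        + ((⨍ x in A', u x) - ⨍ x in B', u x) ^ 2
        + ((⨍ x in B', u x) - ⨍ x in B, u x) ^ 2) := three_term_sq _ _ _ _
  calc ((⨍ x in A, u x) - ⨍ x in B, u x) ^ 2
      ≤ 3 * (((⨍ x in A, u x) - ⨍ x in A', u x) ^ 2
        + ((⨍ x in A', u x) - ⨍ x in B', u x) ^ 2
        + ((⨍ x in B', u x) - ⨍ x in B, u x) ^ 2) := h3
    _ ≤ 3 * ((m * m)⁻¹ * (δ ^ (2 * d))⁻¹ * I1 + (m * m)⁻¹ * (δ ^ (2 * d))⁻¹ * I2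
        + (m * m)⁻¹ * (δ ^ (2 * d))⁻¹ * I3) :=
          mul_le_mul_of_nonneg_left (add_le_add (add_le_add hT1 hT2) hT3) (by norm_num)
    _ = 3 * (m * m)⁻¹ * (δ ^ (2 * d))⁻¹ * (I1 + I2 + I3) := by ring
end
end

section
/- Let A ⊂ ℝ^d be a bounded measurable set, let ε > 0, ε₁ ∈ (0, ε/3), and let M, N be positive integers. Assume: (i) there exist points η¹, …, η^M ∈ ℝ^d such that A ⊆ ⋃_{i=1}^M B(η^i, ε₁); (ii) for every i, j ∈ {1,…,M} there exist points ζ₀ = η^i, ζ₁, …, ζ_L, ζ_{L+1} = η^j with L ≤ N, |ζ_{l+1} − ζ_l| ≤ ε₁ for all 0 ≤ l ≤ L, and B(ζ_l, ε₁) ⊆ A for all 1 ≤ l ≤ L. Then there exists a constant C, depending only on d, M and N, such that for every u ∈ L²(A): ∬_{A×A} |u(x) − u(y)|² dx dy ≤ C ∬_{{(x,y) ∈ A×A : |x−y| < ε}} |u(x) − u(y)|² dx dy. -/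
open MeasureTheory Filter Metric Set Pointwise
open scoped Topology ENNReal NNReal

noncomputable section

namespace Stmt5Aux

variable {α : Type*} [MeasurableSpace α] (μ : Measure α) [SigmaFinite μ]

lemma meas_F {w : α → ℝ} (hw : Measurable w) :
    Measurable (fun p : α × α => ENNReal.ofReal ((w p.1 - w p.2) ^ 2)) :=
  (((hw.comp measurable_fst).sub (hw.comp measurable_snd)).pow_const 2).ennreal_ofReal

lemma J_prod {w : α → ℝ} (hw : Measurable w) (S T : Set α) :
    ∫⁻ p in S ×ˢ T, ENNReal.ofReal ((w p.1 - w p.2) ^ 2) ∂(μ.prod μ)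
      = ∫⁻ x in S, ∫⁻ y in T, ENNReal.ofReal ((w x - w y) ^ 2) ∂μ ∂μ := by
  rw [← Measure.prod_restrict, lintegral_prod _ (meas_F hw).aemeasurable]

lemma J_avg {w : α → ℝ} (hw : Measurable w) (S T B : Set α) :
    μ B * ∫⁻ p in S ×ˢ T, ENNReal.ofReal ((w p.1 - w p.2) ^ 2) ∂(μ.prod μ)
      ≤ 2 * μ T * (∫⁻ p in S ×ˢ B, ENNReal.ofReal ((w p.1 - w p.2) ^ 2) ∂(μ.prod μ))
        + 2 * μ S * (∫⁻ p in B ×ˢ T, ENNReal.ofReal ((w p.1 - w p.2) ^ 2) ∂(μ.prod μ)) := by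
  set F : α → α → ℝ≥0∞ := fun x y => ENNReal.ofReal ((w x - w y) ^ 2) with hF
  have hFm : Measurable (fun p : α × α => F p.1 p.2) := meas_F hw
  have hx : ∀ x : α, Measurable fun y => F x y := fun x =>
    ((measurable_const.sub hw).pow_const 2).ennreal_ofReal
  have hy : ∀ y : α, Measurable fun z => F z y := fun y =>
    ((hw.sub measurable_const).pow_const 2).ennreal_ofReal
  have hg : Measurable fun x => ∫⁻ z in B, F x z ∂μ := hFm.lintegral_prod_right'
  have hh : Measurable fun y => ∫⁻ z in B, F z y ∂μ := hFm.lintegral_prod_left'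
  have hgi : Measurable fun x => ∫⁻ y in T, F x y ∂μ := hFm.lintegral_prod_right'
  have hswap : Measurable (Function.uncurry fun y z => F z y) := hFm.comp measurable_swap
  have hswapeq : ∫⁻ y in T, ∫⁻ z in B, F z y ∂μ ∂μ = ∫⁻ z in B, ∫⁻ y in T, F z y ∂μ ∂μ :=
    lintegral_lintegral_swap hswap.aemeasurable
  rw [J_prod μ hw, J_prod μ hw, J_prod μ hw]
  have key : ∀ x y, μ B * F x y ≤ 2 * (∫⁻ z in B, F x z ∂μ) + 2 * ∫⁻ z in B, F z y ∂μ := by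
    intro x y
    have ptw : ∀ z, F x y ≤ 2 * F x z + 2 * F z y := by
      intro z
      have h1 : (w x - w y) ^ 2 ≤ 2 * (w x - w z) ^ 2 + 2 * (w z - w y) ^ 2 := by
        nlinarith [sq_nonneg (w x + w y - 2 * w z)]
      calc F x y ≤ ENNReal.ofReal (2 * (w x - w z) ^ 2 + 2 * (w z - w y) ^ 2) :=
            ENNReal.ofReal_le_ofReal h1
        _ = 2 * F x z + 2 * F z y := by
            rw [ENNReal.ofReal_add (by positivity) (by positivity),
              ENNReal.ofReal_mul (by norm_num), ENNReal.ofReal_mul (by norm_num)]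
            norm_num
            rfl
    calc μ B * F x y = ∫⁻ _ in B, F x y ∂μ := by rw [setLIntegral_const, mul_comm]
      _ ≤ ∫⁻ z in B, (2 * F x z + 2 * F z y) ∂μ := lintegral_mono ptw
      _ = 2 * (∫⁻ z in B, F x z ∂μ) + 2 * ∫⁻ z in B, F z y ∂μ := by
          rw [lintegral_add_left ((hx x).const_mul 2), lintegral_const_mul 2 (hx x),
            lintegral_const_mul 2 (hy y)]
  calc μ B * ∫⁻ x in S, ∫⁻ y in T, F x y ∂μ ∂μ
      = ∫⁻ x in S, ∫⁻ y in T, μ B * F x y ∂μ ∂μ := by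
        rw [← lintegral_const_mul _ hgi]
        exact lintegral_congr fun x => (lintegral_const_mul _ (hx x)).symm
    _ ≤ ∫⁻ x in S, ∫⁻ y in T, (2 * (∫⁻ z in B, F x z ∂μ) + 2 * ∫⁻ z in B, F z y ∂μ) ∂μ ∂μ :=
        lintegral_mono fun x => lintegral_mono fun y => key x y
    _ = ∫⁻ x in S, (2 * μ T * (∫⁻ z in B, F x z ∂μ)
          + 2 * ∫⁻ y in T, ∫⁻ z in B, F z y ∂μ ∂μ) ∂μ := by
        refine lintegral_congr fun x => ?_
        rw [lintegral_add_left measurable_const, setLIntegral_const,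
          lintegral_const_mul 2 hh, mul_right_comm]
    _ = 2 * μ T * (∫⁻ x in S, ∫⁻ z in B, F x z ∂μ ∂μ)
          + (2 * ∫⁻ y in T, ∫⁻ z in B, F z y ∂μ ∂μ) * μ S := by
        rw [lintegral_add_right _ measurable_const, ← lintegral_const_mul _ hg,
          setLIntegral_const]
    _ = 2 * μ T * (∫⁻ x in S, ∫⁻ z in B, F x z ∂μ ∂μ)
          + 2 * μ S * ∫⁻ z in B, ∫⁻ y in T, F z y ∂μ ∂μ := by
        rw [hswapeq]; ring

end Stmt5Aux

set_option maxHeartbeats 1000000 in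
/-- long-range interactions are controlled by short-range interactions on a
`chain-connected' set. -/
theorem stmt_5 (d : ℕ) (hd : 1 ≤ d) (M N : ℕ) (hM : 0 < M) (hN : 0 < N) :
    ∃ C > (0:ℝ),
      ∀ A : Set (EuclideanSpace ℝ (Fin d)), Bornology.IsBounded A → MeasurableSet A →
      ∀ ε ε₁ : ℝ, 0 < ε₁ → ε₁ < ε / 3 →
      ∀ η : Fin M → EuclideanSpace ℝ (Fin d),
        (A ⊆ ⋃ i : Fin M, Metric.ball (η i) ε₁) →
        (∀ i j : Fin M, ∃ L : ℕ, L ≤ N ∧ ∃ ζ : ℕ → EuclideanSpace ℝ (Fin d),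
          ζ 0 = η i ∧ ζ (L + 1) = η j ∧
          (∀ l ≤ L, dist (ζ (l + 1)) (ζ l) ≤ ε₁) ∧
          (∀ l, 1 ≤ l → l ≤ L → Metric.ball (ζ l) ε₁ ⊆ A)) →
      ∀ u : EuclideanSpace ℝ (Fin d) → ℝ, MemLp u 2 (volume.restrict A) →
        (∫ p in A ×ˢ A, (u p.1 - u p.2) ^ 2) ≤
          C * ∫ p in (A ×ˢ A) ∩
            {p : EuclideanSpace ℝ (Fin d) × EuclideanSpace ℝ (Fin d) | dist p.1 p.2 < ε},
            (u p.1 - u p.2) ^ 2 := by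
  refine ⟨(M:ℝ)^2 * 3^(N+1), by positivity, ?_⟩
  intro A hAb hAm ε ε₁ hε₁ hε₁ε η hcover hchain u hu
  obtain ⟨w, hw, huw⟩ : ∃ w : EuclideanSpace ℝ (Fin d) → ℝ,
      Measurable w ∧ u =ᵐ[volume.restrict A] w :=
    ⟨hu.1.mk u, hu.1.stronglyMeasurable_mk.measurable, hu.1.ae_eq_mk⟩
  set J : Set (EuclideanSpace ℝ (Fin d) × EuclideanSpace ℝ (Fin d)) → ℝ≥0∞ :=
    fun s => ∫⁻ p in s, ENNReal.ofReal ((w p.1 - w p.2) ^ 2)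
      ∂((volume : Measure (EuclideanSpace ℝ (Fin d))).prod volume) with hJ
  set shortS := (A ×ˢ A) ∩
    {p : EuclideanSpace ℝ (Fin d) × EuclideanSpace ℝ (Fin d) | dist p.1 p.2 < ε} with hshortS
  -- distance fact
  have short_pair : ∀ (c c' : EuclideanSpace ℝ (Fin d)), dist c' c ≤ ε₁ →
      ∀ x ∈ ball c ε₁, ∀ y ∈ ball c' ε₁, dist x y < ε := by
    intro c c' hcc x hx y hy
    have h1 : dist x c < ε₁ := mem_ball.mp hx
    have h2 : dist y c' < ε₁ := mem_ball.mp hy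
    have h3 : dist x y ≤ dist x c + dist c c' + dist c' y := dist_triangle4 x c c' y
    rw [dist_comm c c'] at h3
    rw [dist_comm y c'] at h2
    linarith
  have hshort : ∀ P Q : Set (EuclideanSpace ℝ (Fin d)), P ⊆ A → Q ⊆ A →
      (∀ x ∈ P, ∀ y ∈ Q, dist x y < ε) → J (P ×ˢ Q) ≤ J shortS := by
    intro P Q hP hQ hdd
    refine lintegral_mono_set ?_
    rintro ⟨x, y⟩ ⟨hx, hy⟩
    exact ⟨⟨hP hx, hQ hy⟩, hdd x hx y hy⟩
  have hballvol : ∀ c c' : EuclideanSpace ℝ (Fin d),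
      volume (ball c ε₁) = volume (ball c' ε₁) := fun c c' => by
    rw [Measure.addHaar_ball_center volume c, Measure.addHaar_ball_center volume c']
  -- per-pair bound
  have pair : ∀ i j : Fin M,
      J ((A ∩ ball (η i) ε₁) ×ˢ (A ∩ ball (η j) ε₁)) ≤ 3 ^ (N + 1) * J shortS := by
    intro i j
    obtain ⟨L, hLN, ζ, hζ0, hζend, hζd, hζball⟩ := hchain i j
    set T := A ∩ ball (η j) ε₁ with hT
    set X : ℕ → Set (EuclideanSpace ℝ (Fin d)) :=
      fun k => if k = 0 then A ∩ ball (η i) ε₁ else ball (ζ k) ε₁ with hX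
    have hXA : ∀ k ≤ L, X k ⊆ A := by
      intro k hk
      by_cases h0 : k = 0
      · simp only [hX, if_pos h0]; exact inter_subset_left
      · simp only [hX, if_neg h0]
        exact hζball k (Nat.one_le_iff_ne_zero.mpr h0) hk
    have hXball : ∀ k ≤ L, X k ⊆ ball (ζ k) ε₁ := by
      intro k hk
      by_cases h0 : k = 0
      · subst h0; simp only [hX, if_pos rfl]; rw [hζ0]; exact inter_subset_right
      · simp only [hX, if_neg h0]; exact subset_rfl
    have hTA : T ⊆ A := inter_subset_left
    have hTball : T ⊆ ball (ζ (L + 1)) ε₁ := by rw [hζend]; exact inter_subset_right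
    have main : ∀ m k, k + m = L → J (X k ×ˢ T) ≤ 3 ^ (m + 1) * J shortS := by
      intro m
      induction m with
      | zero =>
        intro k hk
        have hkL : k = L := by omega
        rw [hkL]
        calc J (X L ×ˢ T) ≤ J shortS :=
              hshort _ _ (hXA L le_rfl) hTA (fun x hx y hy =>
                short_pair (ζ L) (ζ (L + 1)) (hζd L le_rfl) x (hXball L le_rfl hx) y
                  (hTball hy))
          _ ≤ 3 ^ (0 + 1) * J shortS := le_mul_of_one_le_left zero_le (by norm_num)
      | succ m ih =>
        intro k hk
        have hkL : k ≤ L := by omega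
        have hk1L : k + 1 ≤ L := by omega
        have hXk1 : X (k + 1) = ball (ζ (k + 1)) ε₁ := by simp [hX]
        have havg := Stmt5Aux.J_avg (volume : Measure (EuclideanSpace ℝ (Fin d))) hw
          (X k) T (X (k + 1))
        set v := volume (ball (ζ (k + 1)) ε₁) with hv
        have hvXk1 : volume (X (k + 1)) = v := by rw [hXk1]
        have hvT : volume T ≤ v :=
          (measure_mono inter_subset_right).trans (hballvol (η j) (ζ (k + 1))).le
        have hvXk : volume (X k) ≤ v :=
          (measure_mono (hXball k hkL)).trans (hballvol (ζ k) (ζ (k + 1))).le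
        have hshort1 : J (X k ×ˢ X (k + 1)) ≤ J shortS :=
          hshort _ _ (hXA k hkL) (hXA (k + 1) hk1L) (fun x hx y hy =>
            short_pair (ζ k) (ζ (k + 1)) (hζd k hkL) x (hXball k hkL hx) y
              (hXball (k + 1) hk1L hy))
        have hih : J (X (k + 1) ×ˢ T) ≤ 3 ^ (m + 1) * J shortS := ih (k + 1) (by omega)
        have hvpos : v ≠ 0 := (measure_ball_pos volume _ hε₁).ne'
        have hvfin : v ≠ ∞ := measure_ball_lt_top.ne
        refine (ENNReal.mul_le_mul_iff_right hvpos hvfin).mp ?_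
        calc v * J (X k ×ˢ T) = volume (X (k + 1)) * J (X k ×ˢ T) := by rw [hvXk1]
          _ ≤ 2 * volume T * J (X k ×ˢ X (k + 1))
              + 2 * volume (X k) * J (X (k + 1) ×ˢ T) := havg
          _ ≤ 2 * v * J shortS + 2 * v * (3 ^ (m + 1) * J shortS) := by gcongr
          _ = v * ((2 + 2 * 3 ^ (m + 1)) * J shortS) := by ring
          _ ≤ v * (3 ^ (m + 1 + 1) * J shortS) := by
              gcongr
              have h32 : (2 : ℝ≥0∞) ≤ 3 ^ (m + 1) := by
                calc (2 : ℝ≥0∞) ≤ 3 := by norm_num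
                  _ = 3 ^ 1 := (pow_one _).symm
                  _ ≤ 3 ^ (m + 1) := pow_le_pow_right' (by norm_num) (by omega)
              calc (2 : ℝ≥0∞) + 2 * 3 ^ (m + 1) ≤ 3 ^ (m + 1) + 2 * 3 ^ (m + 1) := by gcongr
                _ = 3 * 3 ^ (m + 1) := by ring
                _ = 3 ^ (m + 1 + 1) := by ring
    have h0 := main L 0 (by omega)
    have hX0 : X 0 = A ∩ ball (η i) ε₁ := by simp [hX]
    rw [hX0] at h0
    exact h0.trans (mul_le_mul_left
      (pow_le_pow_right' (by norm_num : (1 : ℝ≥0∞) ≤ 3) (by omega)) _)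
  -- cover
  have hcover2 : A ×ˢ A ⊆ ⋃ p : Fin M × Fin M,
      (A ∩ ball (η p.1) ε₁) ×ˢ (A ∩ ball (η p.2) ε₁) := by
    rintro ⟨x, y⟩ ⟨hx, hy⟩
    obtain ⟨i, hxi⟩ := mem_iUnion.mp (hcover hx)
    obtain ⟨j, hyj⟩ := mem_iUnion.mp (hcover hy)
    exact mem_iUnion.mpr ⟨(i, j), ⟨⟨hx, hxi⟩, ⟨hy, hyj⟩⟩⟩
  have hkey : J (A ×ˢ A) ≤ ((M ^ 2 * 3 ^ (N + 1) : ℕ) : ℝ≥0∞) * J shortS := by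
    calc J (A ×ˢ A)
        ≤ J (⋃ p : Fin M × Fin M, (A ∩ ball (η p.1) ε₁) ×ˢ (A ∩ ball (η p.2) ε₁)) :=
          lintegral_mono_set hcover2
      _ ≤ ∑' p : Fin M × Fin M, J ((A ∩ ball (η p.1) ε₁) ×ˢ (A ∩ ball (η p.2) ε₁)) :=
          lintegral_iUnion_le _ _
      _ = ∑ p : Fin M × Fin M, J ((A ∩ ball (η p.1) ε₁) ×ˢ (A ∩ ball (η p.2) ε₁)) :=
          tsum_fintype _
      _ ≤ ∑ _p : Fin M × Fin M, 3 ^ (N + 1) * J shortS :=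
          Finset.sum_le_sum fun p _ => pair p.1 p.2
      _ = ((M * M : ℕ) : ℝ≥0∞) * (3 ^ (N + 1) * J shortS) := by
          rw [Finset.sum_const, Finset.card_univ]
          simp [Fintype.card_prod, nsmul_eq_mul]
      _ = ((M ^ 2 * 3 ^ (N + 1) : ℕ) : ℝ≥0∞) * J shortS := by
          push_cast; ring
  -- conversions back to Bochner integrals
  have hvol : (volume : Measure (EuclideanSpace ℝ (Fin d) × EuclideanSpace ℝ (Fin d)))
      = (volume : Measure (EuclideanSpace ℝ (Fin d))).prod volume := rfl
  have hprodrestrict : (volume : Measure (EuclideanSpace ℝ (Fin d) ×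
      EuclideanSpace ℝ (Fin d))).restrict (A ×ˢ A)
      = (volume.restrict A).prod (volume.restrict A) := by
    rw [hvol, ← Measure.prod_restrict]
  have haeprod : (fun p : EuclideanSpace ℝ (Fin d) × EuclideanSpace ℝ (Fin d) =>
      (u p.1 - u p.2) ^ 2) =ᵐ[volume.restrict (A ×ˢ A)]
      (fun p => (w p.1 - w p.2) ^ 2) := by
    rw [hprodrestrict]
    have h1 := (Measure.quasiMeasurePreserving_fst
      (μ := volume.restrict A) (ν := volume.restrict A)).ae_eq huw
    have h2 := (Measure.quasiMeasurePreserving_snd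
      (μ := volume.restrict A) (ν := volume.restrict A)).ae_eq huw
    filter_upwards [h1, h2] with p e1 e2
    simp only [Function.comp_apply] at e1 e2
    rw [e1, e2]
  have haeshort : (fun p : EuclideanSpace ℝ (Fin d) × EuclideanSpace ℝ (Fin d) =>
      (u p.1 - u p.2) ^ 2) =ᵐ[volume.restrict shortS] (fun p => (w p.1 - w p.2) ^ 2) :=
    ae_restrict_of_ae_restrict_of_subset inter_subset_left haeprod
  have hsm : StronglyMeasurable fun p : EuclideanSpace ℝ (Fin d) ×
      EuclideanSpace ℝ (Fin d) => (w p.1 - w p.2) ^ 2 :=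
    (((hw.comp measurable_fst).sub (hw.comp measurable_snd)).pow_const 2).stronglyMeasurable
  have hL : (∫ p in A ×ˢ A, (u p.1 - u p.2) ^ 2) = (J (A ×ˢ A)).toReal := by
    rw [integral_eq_lintegral_of_nonneg_ae (Eventually.of_forall fun p => sq_nonneg _)
      (hsm.aestronglyMeasurable.congr haeprod.symm)]
    congr 1
    rw [hJ]
    rw [← hvol]
    exact lintegral_congr_ae (haeprod.mono fun p hp => by simpa using congrArg ENNReal.ofReal hp)
  have hR : (∫ p in shortS, (u p.1 - u p.2) ^ 2) = (J shortS).toReal := by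
    rw [integral_eq_lintegral_of_nonneg_ae (Eventually.of_forall fun p => sq_nonneg _)
      (hsm.aestronglyMeasurable.congr haeshort.symm)]
    congr 1
    rw [hJ]
    rw [← hvol]
    exact lintegral_congr_ae (haeshort.mono fun p hp => by simpa using congrArg ENNReal.ofReal hp)
  rw [hL, hR]
  by_cases hfin : J shortS = ∞
  · have hbig : J (A ×ˢ A) = ∞ :=
      eq_top_iff.mpr (hfin ▸ lintegral_mono_set inter_subset_left)
    rw [hbig, hfin]
    simp only [ENNReal.toReal_top, mul_zero]
    exact le_refl 0
  · have hCfin : ((M ^ 2 * 3 ^ (N + 1) : ℕ) : ℝ≥0∞) * J shortS ≠ ∞ :=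
      ENNReal.mul_ne_top (ENNReal.natCast_ne_top _) hfin
    have hmono := ENNReal.toReal_mono hCfin hkey
    rw [ENNReal.toReal_mul] at hmono
    refine hmono.trans_eq ?_
    congr 1
    rw [ENNReal.toReal_natCast]
    push_cast
    ring
end
end

section
/- Let X, Y ⊆ ℝ^d be measurable sets with 0 < |X| < ∞ and 0 < |Y| < ∞, and let A ⊆ X, B ⊆ Y be measurable with |A| > 0 and |B| > 0. Then for every u ∈ L²(X ∪ Y): ( ⨍_X u dx − ⨍_Y u dx )² ≤ 3 ( (1/(|X||A|)) ∬_{X×A} (u(x) − u(y))² dx dy + (1/(|A||B|)) ∬_{A×B} (u(x) − u(y))² dx dy + (1/(|B||Y|)) ∬_{B×Y} (u(x) − u(y))² dx dy ). -/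
open MeasureTheory Filter Metric Set Pointwise
open scoped Topology ENNReal NNReal

noncomputable section

private lemma sq_integral_le' {α : Type*} [MeasurableSpace α] (μ : Measure α) [IsFiniteMeasure μ]
    (g : α → ℝ) (hg : Integrable g μ) (hg2 : Integrable (fun x => g x ^ 2) μ) :
    (∫ x, g x ∂μ) ^ 2 ≤ (μ Set.univ).toReal * ∫ x, g x ^ 2 ∂μ := by
  rcases eq_or_ne (μ Set.univ) 0 with h0 | h0
  · have : μ = 0 := Measure.measure_univ_eq_zero.mp h0
    simp [this]
  have hMpos : 0 < (μ Set.univ).toReal := ENNReal.toReal_pos h0 (measure_ne_top _ _)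
  set M := (μ Set.univ).toReal with hM
  set I := ∫ x, g x ∂μ with hI
  set J := ∫ x, g x ^ 2 ∂μ with hJ
  have h : 0 ≤ ∫ x, (g x - I / M) ^ 2 ∂μ := integral_nonneg fun x => sq_nonneg _
  have heq : ∫ x, (g x - I / M) ^ 2 ∂μ = J - 2 * (I / M) * I + (I / M) ^ 2 * M := by
    have hc : ∀ x, (g x - I / M) ^ 2 = g x ^ 2 - 2 * (I / M) * g x + (I / M) ^ 2 := by
      intro x; ring
    simp_rw [hc]
    have ha : Integrable (fun x => g x ^ 2 - 2 * (I / M) * g x) μ := hg2.sub (hg.const_mul _)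
    have hb : Integrable (fun x => g x ^ 2) μ := hg2
    rw [integral_add ha (integrable_const _),
        integral_sub hb (hg.const_mul _), integral_const_mul, integral_const]
    simp [smul_eq_mul, hM, hI, hJ, mul_comm, measureReal_def]
  rw [heq] at h
  have hIM : I / M * M = I := div_mul_cancel₀ I (ne_of_gt hMpos)
  nlinarith [mul_nonneg h hMpos.le, hIM, sq_nonneg I]

private lemma avg_pair_le {d : ℕ} (S T : Set (EuclideanSpace ℝ (Fin d)))
    (hS0 : volume S ≠ 0) (hSfin : volume S ≠ ⊤)
    (hT0 : volume T ≠ 0) (hTfin : volume T ≠ ⊤)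
    (u : EuclideanSpace ℝ (Fin d) → ℝ)
    (huS : MemLp u 2 (volume.restrict S)) (huT : MemLp u 2 (volume.restrict T)) :
    ((⨍ x in S, u x) - ⨍ x in T, u x) ^ 2 ≤
      ((volume S).toReal * (volume T).toReal)⁻¹ * ∫ p in S ×ˢ T, (u p.1 - u p.2) ^ 2 := by
  set μ := volume.restrict S with hμ
  set ν := volume.restrict T with hν
  haveI : IsFiniteMeasure μ := ⟨by rw [Measure.restrict_apply_univ]; exact hSfin.lt_top⟩
  haveI : IsFiniteMeasure ν := ⟨by rw [Measure.restrict_apply_univ]; exact hTfin.lt_top⟩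
  have hiS : Integrable u μ := huS.integrable (by norm_num)
  have hiT : Integrable u ν := huT.integrable (by norm_num)
  have hiS2 : Integrable (fun x => u x ^ 2) μ := huS.integrable_sq
  have hiT2 : Integrable (fun x => u x ^ 2) ν := huT.integrable_sq
  have h1 : Integrable (fun p : EuclideanSpace ℝ (Fin d) × EuclideanSpace ℝ (Fin d) => u p.1)
      (μ.prod ν) := by
    have := hiS.mul_prod (integrable_const (1 : ℝ) : Integrable (fun _ => (1 : ℝ)) ν)
    simpa using this
  have h2 : Integrable (fun p : EuclideanSpace ℝ (Fin d) × EuclideanSpace ℝ (Fin d) => u p.2)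
      (μ.prod ν) := by
    have := (integrable_const (1 : ℝ) : Integrable (fun _ => (1 : ℝ)) μ).mul_prod hiT
    simpa using this
  have h1sq : Integrable (fun p : EuclideanSpace ℝ (Fin d) × EuclideanSpace ℝ (Fin d) =>
      u p.1 ^ 2) (μ.prod ν) := by
    have := hiS2.mul_prod (integrable_const (1 : ℝ) : Integrable (fun _ => (1 : ℝ)) ν)
    simpa using this
  have h2sq : Integrable (fun p : EuclideanSpace ℝ (Fin d) × EuclideanSpace ℝ (Fin d) =>
      u p.2 ^ 2) (μ.prod ν) := by
    have := (integrable_const (1 : ℝ) : Integrable (fun _ => (1 : ℝ)) μ).mul_prod hiT2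
    simpa using this
  have hmul : Integrable (fun p : EuclideanSpace ℝ (Fin d) × EuclideanSpace ℝ (Fin d) =>
      u p.1 * u p.2) (μ.prod ν) := hiS.mul_prod hiT
  have hg : Integrable (fun p : EuclideanSpace ℝ (Fin d) × EuclideanSpace ℝ (Fin d) =>
      u p.1 - u p.2) (μ.prod ν) := h1.sub h2
  have hg2 : Integrable (fun p : EuclideanSpace ℝ (Fin d) × EuclideanSpace ℝ (Fin d) =>
      (u p.1 - u p.2) ^ 2) (μ.prod ν) := by
    have he : (fun p : EuclideanSpace ℝ (Fin d) × EuclideanSpace ℝ (Fin d) =>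
        (u p.1 - u p.2) ^ 2) =
        fun p => (u p.1 ^ 2 - 2 * (u p.1 * u p.2)) + u p.2 ^ 2 := by
      funext p; ring
    rw [he]
    exact (h1sq.sub (hmul.const_mul 2)).add h2sq
  set s := (volume S).toReal with hs
  set t := (volume T).toReal with ht
  have hspos : 0 < s := ENNReal.toReal_pos hS0 hSfin
  have htpos : 0 < t := ENNReal.toReal_pos hT0 hTfin
  -- the integral of the difference
  have hI1 : ∫ p, u p.1 ∂(μ.prod ν) = t * ∫ x, u x ∂μ := by
    have := integral_prod_mul (μ := μ) (ν := ν) u (fun _ => (1 : ℝ))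
    simp only [mul_one] at this
    rw [this, integral_const]
    simp [ht, hν, Measure.restrict_apply_univ, smul_eq_mul, mul_comm, measureReal_def]
  have hI2 : ∫ p, u p.2 ∂(μ.prod ν) = s * ∫ x, u x ∂ν := by
    have := integral_prod_mul (μ := μ) (ν := ν) (fun _ => (1 : ℝ)) u
    simp only [one_mul] at this
    rw [this, integral_const]
    simp [hs, hμ, Measure.restrict_apply_univ, smul_eq_mul, measureReal_def]
  have hIdiff : ∫ p, (u p.1 - u p.2) ∂(μ.prod ν)
      = t * ∫ x, u x ∂μ - s * ∫ x, u x ∂ν := by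
    rw [integral_sub h1 h2, hI1, hI2]
  -- measure of the whole space
  have huniv : ((μ.prod ν) Set.univ).toReal = s * t := by
    rw [← Set.univ_prod_univ, Measure.prod_prod, Measure.restrict_apply_univ,
      Measure.restrict_apply_univ, ENNReal.toReal_mul]
  have hCS := sq_integral_le' (μ.prod ν) _ hg hg2
  rw [hIdiff, huniv] at hCS
  -- rewrite the set integral over the product
  have hprodint : ∫ p in S ×ˢ T, (u p.1 - u p.2) ^ 2
      = ∫ p, (u p.1 - u p.2) ^ 2 ∂(μ.prod ν) := by
    rw [hμ, hν, Measure.prod_restrict, ← Measure.volume_eq_prod]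
  -- averages
  have havg : (⨍ x in S, u x) - ⨍ x in T, u x
      = (s * t)⁻¹ * (t * ∫ x, u x ∂μ - s * ∫ x, u x ∂ν) := by
    rw [setAverage_eq, setAverage_eq]
    simp only [smul_eq_mul, measureReal_def, ← hs, ← ht, hμ, hν]
    field_simp
  rw [havg, hprodint, mul_pow]
  calc ((s * t)⁻¹) ^ 2 * (t * ∫ x, u x ∂μ - s * ∫ x, u x ∂ν) ^ 2
      ≤ ((s * t)⁻¹) ^ 2 * (s * t * ∫ p, (u p.1 - u p.2) ^ 2 ∂(μ.prod ν)) := by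
        apply mul_le_mul_of_nonneg_left hCS (by positivity)
    _ = (s * t)⁻¹ * ∫ p, (u p.1 - u p.2) ^ 2 ∂(μ.prod ν) := by
        field_simp

/-- a three-term estimate for the difference of averages. -/
theorem stmt_6 (d : ℕ) (hd : 1 ≤ d)
    (X Y A B : Set (EuclideanSpace ℝ (Fin d)))
    (hXm : MeasurableSet X) (hYm : MeasurableSet Y)
    (hX0 : 0 < volume X) (hXfin : volume X < ⊤)
    (hY0 : 0 < volume Y) (hYfin : volume Y < ⊤)
    (hAm : MeasurableSet A) (hBm : MeasurableSet B)
    (hAX : A ⊆ X) (hBY : B ⊆ Y) (hA0 : 0 < volume A) (hB0 : 0 < volume B)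
    (u : EuclideanSpace ℝ (Fin d) → ℝ) (hu : MemLp u 2 (volume.restrict (X ∪ Y))) :
    ((⨍ x in X, u x) - ⨍ x in Y, u x) ^ 2 ≤
      3 * (((volume X).toReal * (volume A).toReal)⁻¹ *
            (∫ p in X ×ˢ A, (u p.1 - u p.2) ^ 2) +
          ((volume A).toReal * (volume B).toReal)⁻¹ *
            (∫ p in A ×ˢ B, (u p.1 - u p.2) ^ 2) +
          ((volume B).toReal * (volume Y).toReal)⁻¹ *
            (∫ p in B ×ˢ Y, (u p.1 - u p.2) ^ 2)) := by
  have hXA : volume A < ⊤ := lt_of_le_of_lt (measure_mono hAX) hXfin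
  have hBY' : volume B < ⊤ := lt_of_le_of_lt (measure_mono hBY) hYfin
  have memOf : ∀ S : Set (EuclideanSpace ℝ (Fin d)), S ⊆ X ∪ Y →
      MemLp u 2 (volume.restrict S) := by
    intro S hS
    exact hu.mono_measure (Measure.restrict_mono hS le_rfl)
  have h1 := avg_pair_le X A hX0.ne' hXfin.ne hA0.ne' hXA.ne u
    (memOf X Set.subset_union_left) (memOf A (hAX.trans Set.subset_union_left))
  have h2 := avg_pair_le A B hA0.ne' hXA.ne hB0.ne' hBY'.ne u
    (memOf A (hAX.trans Set.subset_union_left)) (memOf B (hBY.trans Set.subset_union_right))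
  have h3 := avg_pair_le B Y hB0.ne' hBY'.ne hY0.ne' hYfin.ne u
    (memOf B (hBY.trans Set.subset_union_right)) (memOf Y Set.subset_union_right)
  set p := (⨍ x in X, u x) - ⨍ x in A, u x
  set q := (⨍ x in A, u x) - ⨍ x in B, u x
  set r := (⨍ x in B, u x) - ⨍ x in Y, u x
  have hsum : (⨍ x in X, u x) - ⨍ x in Y, u x = p + q + r := by
    simp only [p, q, r]; ring
  clear_value p q r
  rw [hsum]
  have h4 : (p + q + r) ^ 2 ≤ 3 * (p ^ 2 + q ^ 2 + r ^ 2) := by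
    nlinarith [sq_nonneg (p - q), sq_nonneg (q - r), sq_nonneg (p - r)]
  linarith
end
end

section
/- Assume K ⊆ B̄_L (the closed ball of radius L centered at 0). Let δ > 0 and let s ≥ 4(L+1)δ. Then for every z ∈ ℝ^d, the number of indices j ∈ ℤ^d with δ(j + K) ⊆ z + [0,s)^d is at least 2^{−d}(s/δ)^d, and consequently the Lebesgue measure of δE ∩ (z + [0,s)^d) is at least 2^{−d} |K| s^d. -/
open MeasureTheory Filter Metric Set Pointwise
open scoped Topology ENNReal NNReal

noncomputable section

/-- The half-open cube `[0,s)^d`. -/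
def cubeS (d : ℕ) (s : ℝ) : Set (EuclideanSpace ℝ (Fin d)) :=
  {x | ∀ i, 0 ≤ x i ∧ x i < s}


/-- Each coordinate of a Euclidean vector is bounded by its norm. -/
lemma abs_coord_le_norm {d : ℕ} (x : EuclideanSpace ℝ (Fin d)) (i : Fin d) : |x i| ≤ ‖x‖ := by
  rw [EuclideanSpace.norm_eq]
  rw [show |x i| = Real.sqrt (‖x i‖ ^ 2) by rw [Real.sqrt_sq_eq_abs, Real.norm_eq_abs, abs_abs]]
  exact Real.sqrt_le_sqrt (Finset.single_le_sum (f := fun j => ‖x j‖ ^ 2)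
    (fun j _ => sq_nonneg _) (Finset.mem_univ i))

set_option maxHeartbeats 2000000 in
/-- lower bound on the number of cells of `δE` inside a cube of side `s`,
and on the measure of `δE` in such a cube. -/
theorem stmt_8 (d : ℕ) (hd : 1 ≤ d)
    (K : Set (EuclideanSpace ℝ (Fin d))) (hK : IsAdmissibleK d K)
    (L : ℝ) (hKL : K ⊆ Metric.closedBall 0 L)
    (δ s : ℝ) (hδ : 0 < δ) (hs : 4 * (L + 1) * δ ≤ s) :
    ∀ z : EuclideanSpace ℝ (Fin d),
      (s / δ) ^ d / 2 ^ d ≤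
        (Nat.card {j : Fin d → ℤ // δ • (lat d j +ᵥ K) ⊆ z +ᵥ cubeS d s} : ℝ) ∧
      (2:ℝ) ^ (-(d:ℤ)) * (volume K).toReal * s ^ d ≤
        (volume (δ • latSet d K ∩ (z +ᵥ cubeS d s))).toReal := by
  classical
  obtain ⟨⟨U, hUo, hUc, hUb, hKU⟩, hfr, hdisj⟩ := hK
  have hKne : K.Nonempty := ⟨hUc.nonempty.choose, hKU ▸ subset_closure hUc.nonempty.choose_spec⟩
  obtain ⟨x₀, hx₀⟩ := hKne
  have hKcl : IsClosed K := hKU ▸ isClosed_closure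
  have hKmeas : MeasurableSet K := hKcl.measurableSet
  have hcoord : ∀ x ∈ K, ∀ i, |x i| ≤ L := fun x hx i =>
    le_trans (abs_coord_le_norm x i)
      (by simpa [Metric.mem_closedBall, dist_zero_right] using hKL hx)
  have hL0 : 0 ≤ L := le_trans (abs_nonneg _) (hcoord x₀ hx₀ ⟨0, hd⟩)
  have hs0 : 0 < s := lt_of_lt_of_le (by nlinarith) hs
  have hsδ : 4 * (L + 1) ≤ s / δ := (le_div_iff₀ hδ).2 hs
  have hhalf : s / (2 * δ) * 2 = s / δ := by field_simp
  intro z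
  set a : Fin d → ℤ := fun i => ⌈z i / δ + L⌉ with ha
  set b : Fin d → ℤ := fun i => ⌈z i / δ + s / δ - L⌉ - 1 with hb
  set T : Finset (Fin d → ℤ) := Fintype.piFinset fun i => Finset.Icc (a i) (b i) with hT
  set P : Set (Fin d → ℤ) := {j | δ • (lat d j +ᵥ K) ⊆ z +ᵥ cubeS d s} with hPdef
  -- coordinate formula
  have hco : ∀ (j : Fin d → ℤ) (y : EuclideanSpace ℝ (Fin d)) (i : Fin d),
      (-z +ᵥ δ • (lat d j +ᵥ y)) i = δ * ((j i : ℝ) + y i) - z i := by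
    intro j y i
    simp only [vadd_eq_add, PiLp.add_apply, PiLp.smul_apply, PiLp.neg_apply, smul_eq_mul, lat, PiLp.toLp_apply]
    ring
  -- per-coordinate count
  have hcard_i : ∀ i, s / (2 * δ) ≤ ((Finset.Icc (a i) (b i)).card : ℝ) := by
    intro i
    have c1 : (a i : ℝ) < z i / δ + L + 1 := by
      simpa [ha] using Int.ceil_lt_add_one (z i / δ + L)
    have c2 : (z i / δ + s / δ - L : ℝ) ≤ ((⌈z i / δ + s / δ - L⌉ : ℤ) : ℝ) := Int.le_ceil _
    have hb' : ((b i : ℝ)) = ((⌈z i / δ + s / δ - L⌉ : ℤ) : ℝ) - 1 := by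
      rw [hb]; push_cast; ring
    have h2 : s / (2 * δ) ≤ (b i : ℝ) + 1 - (a i : ℝ) := by
      rw [hb']; linarith [hhalf, hsδ, c1, c2]
    have h0 : (0 : ℝ) ≤ (b i : ℝ) + 1 - (a i : ℝ) := le_trans (by positivity) h2
    have h0' : (0 : ℤ) ≤ b i + 1 - a i := by exact_mod_cast h0
    rw [Int.card_Icc]
    have hcast : (((b i + 1 - a i).toNat : ℕ) : ℝ) = (b i : ℝ) + 1 - (a i : ℝ) := by
      have := Int.toNat_of_nonneg h0'
      exact_mod_cast congrArg (Int.cast : ℤ → ℝ) this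
    rw [hcast]; exact h2
  -- Claim A : cells indexed by T fit in the cube
  have hTP : ∀ j ∈ T, δ • (lat d j +ᵥ K) ⊆ z +ᵥ cubeS d s := by
    intro j hj
    simp only [hT, Fintype.mem_piFinset, Finset.mem_Icc] at hj
    intro x hx
    rw [Set.mem_smul_set] at hx
    obtain ⟨w, hw, rfl⟩ := hx
    rw [Set.mem_vadd_set] at hw
    obtain ⟨y, hy, rfl⟩ := hw
    rw [Set.mem_vadd_set_iff_neg_vadd_mem]
    simp only [cubeS, Set.mem_setOf_eq]
    intro i
    obtain ⟨hyl, hyu⟩ := abs_le.1 (hcoord y hy i)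
    obtain ⟨hj1, hj2⟩ := hj i
    have hji1 : (z i / δ + L : ℝ) ≤ (j i : ℝ) :=
      le_trans (Int.le_ceil _) (Int.cast_le.2 (show ⌈z i / δ + L⌉ ≤ j i from hj1))
    have hji2 : ((j i : ℝ)) < z i / δ + s / δ - L := by
      have hle1 : ((j i : ℝ)) ≤ (b i : ℝ) := by exact_mod_cast hj2
      have hb' : ((b i : ℝ)) = ((⌈z i / δ + s / δ - L⌉ : ℤ) : ℝ) - 1 := by
        rw [hb]; push_cast; ring
      have := Int.ceil_lt_add_one (z i / δ + s / δ - L)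
      linarith
    rw [hco j y i]
    have hz : δ * (z i / δ) = z i := by field_simp
    have hss : δ * (s / δ) = s := by field_simp
    constructor
    · nlinarith [mul_nonneg hδ.le (show (0:ℝ) ≤ (j i : ℝ) + y i - z i / δ by linarith)]
    · nlinarith [mul_pos hδ (show (0:ℝ) < z i / δ + s / δ - ((j i : ℝ) + y i) by linarith)]
  -- finiteness of P
  have hPfin : P.Finite := by
    apply Set.Finite.subset
      (Set.finite_Icc (fun i => (⌊z i / δ - L⌋ : ℤ)) (fun i => ⌈z i / δ + s / δ + L⌉))
    intro j hj
    have hmem : δ • (lat d j +ᵥ x₀) ∈ z +ᵥ cubeS d s :=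
      hj (Set.smul_mem_smul_set (Set.vadd_mem_vadd_set hx₀))
    rw [Set.mem_vadd_set_iff_neg_vadd_mem] at hmem
    simp only [cubeS, Set.mem_setOf_eq] at hmem
    rw [Set.mem_Icc]
    obtain ⟨hx0l', hx0u'⟩ : True ∧ True := ⟨trivial, trivial⟩
    constructor <;> (rw [Pi.le_def]; intro i) <;>
    · obtain ⟨hm1, hm2⟩ := hmem i
      rw [hco j x₀ i] at hm1 hm2
      obtain ⟨hyl, hyu⟩ := abs_le.1 (hcoord x₀ hx₀ i)
      have hz : δ * (z i / δ) = z i := by field_simp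
      have hss : δ * (s / δ) = s := by field_simp
      have hlow : z i / δ - L ≤ (j i : ℝ) := by
        nlinarith [mul_pos hδ (show (0:ℝ) < (1:ℝ) by norm_num)]
      have hup : (j i : ℝ) ≤ z i / δ + s / δ + L := by
        nlinarith
      first
        | exact Int.cast_le.1 (le_trans (Int.floor_le (z i / δ - L)) hlow)
        | exact Int.cast_le.1 (le_trans hup (Int.le_ceil (z i / δ + s / δ + L)))
  -- cardinality bound
  have hTcard : ((s / (2 * δ)) ^ d : ℝ) ≤ (T.card : ℝ) := by
    rw [hT, Fintype.card_piFinset]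
    push_cast
    calc (s / (2 * δ)) ^ d = ∏ _i : Fin d, (s / (2 * δ)) := by
          rw [Finset.prod_const, Finset.card_univ, Fintype.card_fin]
      _ ≤ ∏ i, ((Finset.Icc (a i) (b i)).card : ℝ) :=
          Finset.prod_le_prod (fun _ _ => by positivity) (fun i _ => hcard_i i)
  have heq : (s / δ) ^ d / 2 ^ d = (s / (2 * δ)) ^ d := by
    rw [div_pow, div_pow, mul_pow, div_div]
    ring
  have hP1 : (s / δ) ^ d / 2 ^ d ≤
      (Nat.card {j : Fin d → ℤ // δ • (lat d j +ᵥ K) ⊆ z +ᵥ cubeS d s} : ℝ) := by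
    have e1 : Nat.card {j : Fin d → ℤ // δ • (lat d j +ᵥ K) ⊆ z +ᵥ cubeS d s} = P.ncard :=
      Nat.card_coe_set_eq P
    rw [e1]
    have h2 : T.card ≤ P.ncard := by
      rw [← Set.ncard_coe_finset]
      exact Set.ncard_le_ncard (fun j hj => hTP j (Finset.mem_coe.1 hj)) hPfin
    calc (s / δ) ^ d / 2 ^ d = (s / (2 * δ)) ^ d := heq
      _ ≤ (T.card : ℝ) := hTcard
      _ ≤ (P.ncard : ℝ) := by exact_mod_cast h2
  refine ⟨hP1, ?_⟩
  -- measure estimate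
  have hmeasCell : ∀ j : Fin d → ℤ, MeasurableSet (δ • (lat d j +ᵥ K)) := fun j =>
    (hKmeas.const_vadd (lat d j)).const_smul₀ δ
  have hdisj2 : ∀ j j' : Fin d → ℤ, j ≠ j' →
      Disjoint (δ • (lat d j +ᵥ K)) (δ • (lat d j' +ᵥ K)) := by
    intro j j' hne
    rw [← Set.image_smul, ← Set.image_smul]
    refine (Set.disjoint_image_iff (smul_right_injective _ hδ.ne')).2 ?_
    rw [Set.disjoint_left]
    intro x hx hx'
    rw [Set.mem_vadd_set] at hx hx'
    obtain ⟨y, hy, rfl⟩ := hx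
    obtain ⟨y', hy', he⟩ := hx'
    have hl : lat d (j' - j) = lat d j' - lat d j := by
      ext i; simp [lat, PiLp.sub_apply]
    have hyy : lat d (j' - j) +ᵥ y' = y := by
      rw [vadd_eq_add, hl, sub_add_eq_add_sub]
      rw [vadd_eq_add, vadd_eq_add] at he
      rw [he]
      abel
    exact Set.disjoint_left.1 (hdisj (j' - j) (sub_ne_zero.2 (Ne.symm hne)))
      ⟨y', hy', hyy⟩ hy
  have hvol_cell : ∀ j : Fin d → ℤ,
      volume (δ • (lat d j +ᵥ K)) = ENNReal.ofReal (δ ^ d) * volume K := by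
    intro j
    rw [Measure.addHaar_smul_of_nonneg volume hδ.le, finrank_euclideanSpace_fin, measure_vadd]
  have hUsub : (⋃ j ∈ T, δ • (lat d j +ᵥ K)) ⊆ δ • latSet d K ∩ (z +ᵥ cubeS d s) := by
    intro x hx
    simp only [Set.mem_iUnion] at hx
    obtain ⟨j, hj, hxj⟩ := hx
    exact ⟨Set.smul_set_mono (Set.subset_iUnion (fun k => lat d k +ᵥ K) j) hxj, hTP j hj hxj⟩
  have hsum : volume (⋃ j ∈ T, δ • (lat d j +ᵥ K)) =
      (T.card : ℝ≥0∞) * (ENNReal.ofReal (δ ^ d) * volume K) := by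
    rw [measure_biUnion_finset (fun j _ j' _ hne => hdisj2 j j' hne) (fun j _ => hmeasCell j)]
    simp only [hvol_cell, Finset.sum_const, nsmul_eq_mul]
  have hle : (T.card : ℝ≥0∞) * (ENNReal.ofReal (δ ^ d) * volume K) ≤
      volume (δ • latSet d K ∩ (z +ᵥ cubeS d s)) := by
    rw [← hsum]; exact measure_mono hUsub
  have hcube_bdd : Bornology.IsBounded (z +ᵥ cubeS d s) := by
    have h1 : Bornology.IsBounded (cubeS d s) := by
      rw [isBounded_iff_forall_norm_le]
      refine ⟨Real.sqrt (d * s ^ 2), fun x hx => ?_⟩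
      rw [EuclideanSpace.norm_eq]
      apply Real.sqrt_le_sqrt
      calc ∑ i, ‖x i‖ ^ 2 ≤ ∑ _i : Fin d, s ^ 2 := by
            refine Finset.sum_le_sum fun i _ => ?_
            have hxi : 0 ≤ x i ∧ x i < s := hx i
            rw [Real.norm_eq_abs, sq_abs]
            nlinarith [hxi.1, hxi.2]
        _ = d * s ^ 2 := by simp [Finset.sum_const]
    have h2 : z +ᵥ cubeS d s = {z} + cubeS d s := by rw [Set.singleton_add]; rfl
    rw [h2]; exact Bornology.isBounded_singleton.add h1
  have hfin2 : volume (δ • latSet d K ∩ (z +ᵥ cubeS d s)) ≠ ⊤ :=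
    ((measure_mono Set.inter_subset_right).trans_lt hcube_bdd.measure_lt_top).ne
  have htr := ENNReal.toReal_mono hfin2 hle
  rw [ENNReal.toReal_mul, ENNReal.toReal_mul, ENNReal.toReal_ofReal (by positivity),
    ENNReal.toReal_natCast] at htr
  refine le_trans ?_ htr
  have key : (s / (2 * δ)) ^ d * (δ ^ d * (volume K).toReal) ≤
      (T.card : ℝ) * (δ ^ d * (volume K).toReal) :=
    mul_le_mul_of_nonneg_right hTcard (by positivity)
  refine le_trans (le_of_eq ?_) key
  rw [zpow_neg, zpow_natCast, div_pow, mul_pow]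
  field_simp
end
end
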